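/- arXiv:1005.0316 — 6 statements merged into one kernel-verified Lean document; each statement's English description precedes it below -/
import Mathlib

section
/- Let λ be a partition of n and identify the boxes of the doubled diagram 2λ = (2λ₁, 2λ₂, …) with {1,…,2n} by numbering them consecutively along the rows. Let S be the first pair-partition of [2n] (pairing 2i−1 with 2i), which pairs each box in column 2i−1 with its right neighbor in column 2i. If σ is a permutation of {1,…,2n} that maps every box of 2λ to a box in the same column, then the sign of σ equals (−1)^{n − |L(σ·S, S)|}, where σ·S = σ∘S∘σ⁻¹ and |L(·,·)| is the number of loops. -/
open scoped BigOperators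

namespace ZonalPP

/-- A pair-partition of `[N]` (with `N` even), encoded as a fixed-point-free involution. -/
def IsPairPartition {N : ℕ} (s : Equiv.Perm (Fin N)) : Prop :=
  Function.Involutive s ∧ ∀ x, s x ≠ x

noncomputable instance {G α : Type*} [Group G] [MulAction G α] [Finite α] :
    Fintype (MulAction.orbitRel.Quotient G α) :=
  Fintype.ofFinite _

/-- The loops of a couple of pair-partitions: orbits of the subgroup generated by `a, b`. -/
abbrev Loops {N : ℕ} (a b : Equiv.Perm (Fin N)) : Type :=
  MulAction.orbitRel.Quotient (Subgroup.closure ({a, b} : Set (Equiv.Perm (Fin N)))) (Fin N)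

/-- The set of elements of a loop. -/
def loopSet {N : ℕ} {a b : Equiv.Perm (Fin N)} (q : Loops a b) : Set (Fin N) :=
  MulAction.orbitRel.Quotient.orbit q

/-- Number of loops `|L(a,b)|`. -/
noncomputable def numLoops {N : ℕ} (a b : Equiv.Perm (Fin N)) : ℕ :=
  Nat.card (Loops a b)

/-- The type of a couple of pair-partitions: the multiset of halved loop sizes. -/
noncomputable def loopType {N : ℕ} (a b : Equiv.Perm (Fin N)) : Multiset ℕ :=
  (Finset.univ : Finset (Loops a b)).val.map fun q => Nat.card (loopSet q) / 2

/-- The multiset of cycle lengths (including fixed points) of a permutation. -/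
noncomputable def cycleSizes {N : ℕ} (σ : Equiv.Perm (Fin N)) : Multiset ℕ :=
  (Finset.univ : Finset (MulAction.orbitRel.Quotient
      (Subgroup.closure ({σ} : Set (Equiv.Perm (Fin N)))) (Fin N))).val.map
    fun q => Nat.card (MulAction.orbitRel.Quotient.orbit q)

/-- `z_μ = μ₁μ₂⋯ ∏ᵢ mᵢ(μ)!`. -/
def zMu {n : ℕ} (μ : n.Partition) : ℕ :=
  μ.parts.prod * ∏ i ∈ μ.parts.toFinset, (μ.parts.count i).factorial

/-- The first pair-partition `S`, pairing `2i` with `2i+1` (0-indexed). -/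
def firstPP (n : ℕ) : Equiv.Perm (Fin (2 * n)) where
  toFun x := ⟨2 * ((x : ℕ) / 2) + (1 - (x : ℕ) % 2), by have := x.isLt; omega⟩
  invFun x := ⟨2 * ((x : ℕ) / 2) + (1 - (x : ℕ) % 2), by have := x.isLt; omega⟩
  left_inv x := by
    apply Fin.ext
    have := x.isLt
    simp only [Fin.val_mk]
    omega
  right_inv x := by
    apply Fin.ext
    have := x.isLt
    simp only [Fin.val_mk]
    omega

/-- Row lengths of a partition (weakly decreasing), 0-indexed; `rowLen lam r = λ_{r+1}`. -/
def rowLen {n : ℕ} (lam : n.Partition) (r : ℕ) : ℕ :=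
  ((lam.parts.sort (· ≤ ·)).reverse).getD r 0

/-- `f` maps into the boxes of `2λ`; a box is a pair `(row, column)`, both 0-indexed. -/
def InBoxes2 {M n : ℕ} (lam : n.Partition) (f : Fin M → ℕ × ℕ) : Prop :=
  ∀ l, (f l).2 < 2 * rowLen lam (f l).1

/-- Condition (P0): `f l` and `f (S₀ l)` are neighbors in `2λ`. -/
def P0cond {M : ℕ} (S0 : Equiv.Perm (Fin M)) (f : Fin M → ℕ × ℕ) : Prop :=
  ∀ l, (f (S0 l)).1 = (f l).1 ∧ (f (S0 l)).2 / 2 = (f l).2 / 2 ∧ (f (S0 l)).2 ≠ (f l).2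

/-- Condition (P1): `f l` and `f (S₀ (S₁ l))` are in the same column. -/
def P1cond {M : ℕ} (S0 S1 : Equiv.Perm (Fin M)) (f : Fin M → ℕ × ℕ) : Prop :=
  ∀ l, (f (S0 (S1 l))).2 = (f l).2

/-- Condition (P2): `f l` and `f (S₂ l)` are in the same row. -/
def P2cond {M : ℕ} (S2 : Equiv.Perm (Fin M)) (f : Fin M → ℕ × ℕ) : Prop :=
  ∀ l, (f (S2 l)).1 = (f l).1

/-- `N²_{S₀,S₁,S₂}(λ)`: the number of functions from `[2k]` to the boxes of `2λ`
satisfying (P0), (P1), (P2). -/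
noncomputable def N2 {k n : ℕ} (S0 S1 S2 : Equiv.Perm (Fin (2*k))) (lam : n.Partition) : ℕ :=
  Nat.card {f : Fin (2*k) → ℕ × ℕ //
    InBoxes2 lam f ∧ P0cond S0 f ∧ P1cond S0 S1 f ∧ P2cond S2 f}

/-- `N̂²_{S₀,S₁,S₂}(λ)`: the number of injective such functions. -/
noncomputable def Nhat2 {k n : ℕ} (S0 S1 S2 : Equiv.Perm (Fin (2*k))) (lam : n.Partition) : ℕ :=
  Nat.card {f : Fin (2*k) → ℕ × ℕ //
    Function.Injective f ∧ InBoxes2 lam f ∧ P0cond S0 f ∧ P1cond S0 S1 f ∧ P2cond S2 f}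

/-- `N¹_{S₀,S₁,S₂}(λ)`: the number of functions from `[2k]` to the boxes of `λ` such that
`f∘S₀ = f`, `f(S₁ l)` is in the same column as `f l`, and `f(S₂ l)` is in the same row. -/
noncomputable def N1 {k n : ℕ} (S0 S1 S2 : Equiv.Perm (Fin (2*k))) (lam : n.Partition) : ℕ :=
  Nat.card {f : Fin (2*k) → ℕ × ℕ //
    (∀ l, (f l).2 < rowLen lam (f l).1) ∧ (∀ l, f (S0 l) = f l) ∧
    (∀ l, (f (S1 l)).2 = (f l).2) ∧ (∀ l, (f (S2 l)).1 = (f l).1)}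

/-- `T` is the pair-partition `S̃` of `[2n]` obtained from the pair-partition `S` of `[2k]`
by adjoining the pairs `{2k+1, 2k+2}, …, {2n-1, 2n}` (1-indexed). -/
def ExtendsPP {k n : ℕ} (S : Equiv.Perm (Fin (2*k))) (T : Equiv.Perm (Fin (2*n))) : Prop :=
  (∀ (x : Fin (2*k)) (y : Fin (2*n)), (x : ℕ) = (y : ℕ) → ((T y : ℕ) = (S x : ℕ))) ∧
  (∀ y : Fin (2*n), 2*k ≤ (y : ℕ) → ((T y : ℕ) = 2 * ((y : ℕ)/2) + (1 - (y : ℕ) % 2)))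

end ZonalPP


open Equiv Equiv.Perm MulAction Subgroup

theorem Equiv.Perm.apply_inv_self {β : Type*} (f : Perm β) (x : β) : f (f⁻¹ x) = x :=
  f.apply_symm_apply x

theorem Equiv.Perm.inv_apply_self {β : Type*} (f : Perm β) (x : β) : f⁻¹ (f x) = x :=
  f.symm_apply_apply x

namespace ZonalAux

theorem multiset_card_le_sum (m : Multiset ℕ) (h : ∀ x ∈ m, 1 ≤ x) : Multiset.card m ≤ m.sum := by
  induction m using Multiset.induction_on with
  | empty => simp
  | cons a s ih =>
    simp only [Multiset.card_cons, Multiset.sum_cons]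
    have := h a (Multiset.mem_cons_self a s)
    have := ih (fun x hx => h x (Multiset.mem_cons_of_mem hx))
    omega

theorem orbitRel_zpowers_iff {α : Type*} (f : Perm α) (x y : α) :
    (MulAction.orbitRel (zpowers f) α) x y ↔ f.SameCycle y x := by
  constructor
  · rintro ⟨⟨g, k, rfl⟩, hg⟩
    exact ⟨k, hg⟩
  · rintro ⟨k, hk⟩
    exact ⟨⟨f ^ k, k, rfl⟩, hk⟩

variable {α : Type*} [Fintype α] [DecidableEq α]

/-- orbit quotient of zpowers f ≃ fixed points ⊕ cycle factors -/
noncomputable def orbitsEquiv (f : Perm α) :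
    orbitRel.Quotient (zpowers f) α ≃ ({x : α // f x = x} ⊕ {c // c ∈ f.cycleFactorsFinset}) := by
  have hfix : ∀ x y : α, f.SameCycle y x → f y = y → x = y := by
    rintro x y ⟨k, hk⟩ hy
    rw [← hk]
    exact (f.zpow_apply_eq_self_of_apply_eq_self hy k)
  have key : ∀ x y : α, (MulAction.orbitRel (zpowers f) α) x y →
      (if h : f x = x then (Sum.inl ⟨x, h⟩ : {x : α // f x = x} ⊕ {c // c ∈ f.cycleFactorsFinset})
        else Sum.inr ⟨f.cycleOf x, (Equiv.Perm.cycleOf_mem_cycleFactorsFinset_iff).mpr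
          (Equiv.Perm.mem_support.mpr h)⟩)
      = (if h : f y = y then Sum.inl ⟨y, h⟩ else
        Sum.inr ⟨f.cycleOf y, (Equiv.Perm.cycleOf_mem_cycleFactorsFinset_iff).mpr
          (Equiv.Perm.mem_support.mpr h)⟩) := by
    intro x y hxy
    rw [orbitRel_zpowers_iff] at hxy
    by_cases hy : f y = y
    · obtain rfl := hfix x y hxy hy
      rfl
    · have hx : f x ≠ x := by
        intro hx
        exact hy (by rw [hfix y x hxy.symm hx]; exact hx)
      rw [dif_neg hx, dif_neg hy]
      congr 1
      exact Subtype.ext hxy.symm.cycleOf_eq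
  refine Equiv.ofBijective (Quotient.lift (fun x =>
      if h : f x = x then Sum.inl ⟨x, h⟩ else
        Sum.inr ⟨f.cycleOf x, (Equiv.Perm.cycleOf_mem_cycleFactorsFinset_iff).mpr
          (Equiv.Perm.mem_support.mpr h)⟩) key) ⟨?_, ?_⟩
  · intro q r
    induction q using Quotient.ind
    induction r using Quotient.ind
    rename_i x y
    simp only [Quotient.lift_mk]
    intro h
    refine Quotient.sound ?_
    refine (orbitRel_zpowers_iff f x y).mpr ?_
    by_cases hx : f x = x <;> by_cases hy : f y = y <;>
      simp only [dif_pos, dif_neg, hx, hy] at h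
    · cases h; exact Equiv.Perm.SameCycle.refl _ _
    · exact absurd h (by simp)
    · exact absurd h (by simp)
    · have hcyc : f.cycleOf x = f.cycleOf y := congrArg Subtype.val (Sum.inr_injective h)
      have : x ∈ (f.cycleOf y).support := by
        rw [← hcyc]
        exact Equiv.Perm.mem_support_cycleOf_iff.mpr ⟨Equiv.Perm.SameCycle.refl _ _,
          Equiv.Perm.mem_support.mpr hx⟩
      exact (Equiv.Perm.mem_support_cycleOf_iff.mp this).1
  · rintro (⟨x, h⟩ | ⟨c, hc⟩)
    · exact ⟨⟦x⟧, by simp [h]⟩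
    · obtain ⟨x, hx, -⟩ := (Equiv.Perm.mem_cycleFactorsFinset_iff.mp hc).1
      have hxc : x ∈ c.support := Equiv.Perm.mem_support.mpr hx
      have hfx : f x ≠ x := by
        rw [← (Equiv.Perm.mem_cycleFactorsFinset_iff.mp hc).2 x hxc]
        exact hx
      refine ⟨⟦x⟧, ?_⟩
      simp only [Quotient.lift_mk, dif_neg hfx]
      congr 1
      exact Subtype.ext (Equiv.Perm.cycle_is_cycleOf hxc hc).symm

theorem card_orbits_zpowers (f : Perm α) :
    Nat.card (orbitRel.Quotient (zpowers f) α)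
      = (Fintype.card α - f.cycleType.sum) + Multiset.card f.cycleType := by
  rw [Nat.card_congr (orbitsEquiv f), Nat.card_sum]
  congr 1
  · rw [Nat.card_eq_fintype_card, ← Equiv.Perm.card_fixedPoints f]
    exact Fintype.card_congr (Equiv.subtypeEquivRight (fun x => Iff.rfl))
  · rw [Nat.card_eq_fintype_card, Fintype.card_coe, Equiv.Perm.cycleType_def,
      Multiset.card_map]
    rfl

theorem sign_orbits (f : Perm α) :
    Nat.card (orbitRel.Quotient (zpowers f) α) ≤ Fintype.card α ∧
    Perm.sign f = (-1 : ℤˣ) ^ (Fintype.card α - Nat.card (orbitRel.Quotient (zpowers f) α)) := by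
  have hcard := card_orbits_zpowers f
  have hs : f.cycleType.sum = f.support.card := f.sum_cycleType
  have hsle : f.support.card ≤ Fintype.card α := f.support.card_le_univ
  have hcle : Multiset.card f.cycleType ≤ f.cycleType.sum :=
    multiset_card_le_sum _ (fun x hx => le_trans (by norm_num) (two_le_of_mem_cycleType hx))
  constructor
  · omega
  · have hexp : Fintype.card α - Nat.card (orbitRel.Quotient (zpowers f) α)
        = f.cycleType.sum - Multiset.card f.cycleType := by omega
    rw [hexp, f.sign_of_cycleType]
    have h2 : f.cycleType.sum + Multiset.card f.cycleType
        = (f.cycleType.sum - Multiset.card f.cycleType) + 2 * Multiset.card f.cycleType := by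
      omega
    rw [h2, pow_add, pow_mul]
    norm_num

/-- The explicit equivalence `Fin n × Bool ≃ Fin (2*n)`. -/
def EE (n : ℕ) : Fin n × Bool ≃ Fin (2 * n) where
  toFun p := ⟨2 * p.1.val + (if p.2 then 1 else 0), by
    have := p.1.isLt; cases p.2 <;> simp <;> omega⟩
  invFun t := (⟨t.val / 2, by have := t.isLt; omega⟩, decide ((t : ℕ) % 2 = 1))
  left_inv p := by
    obtain ⟨i, b⟩ := p
    have := i.isLt
    cases b <;> refine Prod.ext_iff.mpr ⟨Fin.ext ?_, ?_⟩ <;> simp <;> omega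
  right_inv t := by
    apply Fin.ext
    have := t.isLt
    by_cases h : (t : ℕ) % 2 = 1 <;> simp [h] <;> omega

lemma EE_val {n : ℕ} (i : Fin n) (b : Bool) :
    ((EE n (i, b)) : ℕ) = 2 * i.val + (if b then 1 else 0) := rfl

lemma EE_symm_fst {n : ℕ} (t : Fin (2 * n)) :
    (((EE n).symm t).1 : ℕ) = (t : ℕ) / 2 := rfl

lemma EE_symm_snd {n : ℕ} (t : Fin (2 * n)) :
    ((EE n).symm t).2 = decide ((t : ℕ) % 2 = 1) := rfl

/-- If `g` preserves parity then it maps each fiber of `EE` to itself via some permutation. -/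
lemma fiber_perm {n : ℕ} (g : Perm (Fin (2 * n))) (hg : ∀ t, ((g t : ℕ)) % 2 = (t : ℕ) % 2)
    (b : Bool) : ∃ h : Perm (Fin n), ∀ i, g (EE n (i, b)) = EE n (h i, b) := by
  have hsnd : ∀ i : Fin n, ((EE n).symm (g (EE n (i, b)))).2 = b := by
    intro i
    rw [EE_symm_snd, hg, EE_val]
    cases b <;> simp <;> omega
  have key : ∀ i : Fin n, g (EE n (i, b)) = EE n ((((EE n).symm (g (EE n (i, b)))).1), b) := by
    intro i
    have hp : (EE n).symm (g (EE n (i, b)))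
        = ((((EE n).symm (g (EE n (i, b)))).1), b) := Prod.ext_iff.mpr ⟨rfl, hsnd i⟩
    exact ((EE n).symm_apply_eq.mp hp)
  have hsnd' : ∀ i : Fin n, ((EE n).symm (g⁻¹ (EE n (i, b)))).2 = b := by
    intro i
    rw [EE_symm_snd]
    have : ((g (g⁻¹ (EE n (i, b))) : ℕ)) % 2 = ((g⁻¹ (EE n (i, b)) : ℕ)) % 2 := hg _
    rw [Equiv.Perm.apply_inv_self] at this
    rw [← this, EE_val]
    cases b <;> simp <;> omega
  have key' : ∀ i : Fin n, g⁻¹ (EE n (i, b)) = EE n ((((EE n).symm (g⁻¹ (EE n (i, b)))).1), b) := by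
    intro i
    have hp : (EE n).symm (g⁻¹ (EE n (i, b)))
        = ((((EE n).symm (g⁻¹ (EE n (i, b)))).1), b) := Prod.ext_iff.mpr ⟨rfl, hsnd' i⟩
    exact ((EE n).symm_apply_eq.mp hp)
  refine ⟨⟨fun i => (((EE n).symm (g (EE n (i, b)))).1),
    fun i => (((EE n).symm (g⁻¹ (EE n (i, b)))).1), ?_, ?_⟩, ?_⟩
  · intro i
    have h1 := key i
    have : g⁻¹ (EE n ((((EE n).symm (g (EE n (i, b)))).1), b)) = EE n (i, b) := by
      rw [← h1, Equiv.Perm.inv_apply_self]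
    simp only [this]
    simp
  · intro i
    have h1 := key' i
    have : g (EE n ((((EE n).symm (g⁻¹ (EE n (i, b)))).1), b)) = EE n (i, b) := by
      rw [← h1, Equiv.Perm.apply_inv_self]
    simp only [this]
    simp
  · intro i
    exact key i

end ZonalAux

namespace ZonalPP

/-- Boxes of `2λ` are numbered consecutively along the rows (the functions
`row, col` give the coordinates of the box with a given number, which characterizes the
numbering uniquely). If a permutation `σ` of the boxes preserves each column, then its sign
is `(-1) ^ (n - |L(σ·S, S)|)`, where `S` is the first pair-partition. -/
theorem statement1 {n : ℕ} (lam : Nat.Partition n) (row col : Fin (2*n) → ℕ)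
    (hT : ∀ t, col t < 2 * rowLen lam (row t) ∧
      (∑ r ∈ Finset.range (row t), 2 * rowLen lam r) + col t = (t : ℕ))
    (σ : Equiv.Perm (Fin (2*n)))
    (hσ : ∀ t, col (σ t) = col t) :
    Equiv.Perm.sign σ = (-1 : ℤˣ) ^ (n - numLoops (σ * firstPP n * σ⁻¹) (firstPP n)) := by

  classical
  open ZonalAux in
  set P := firstPP n with hPdef
  set A := σ * P * σ⁻¹ with hAdef
  -- basic facts about P
  have hPapp : ∀ x : Fin (2*n), ((P x : ℕ)) = 2 * ((x : ℕ) / 2) + (1 - (x : ℕ) % 2) := by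
    intro x; rfl
  have hPP : ∀ x : Fin (2*n), P (P x) = x := by
    intro x
    apply Fin.ext
    rw [hPapp, hPapp]
    have := x.isLt
    omega
  have hPE : ∀ (i : Fin n) (b : Bool), P (EE n (i, b)) = EE n (i, !b) := by
    intro i b
    apply Fin.ext
    rw [hPapp, EE_val, EE_val]
    cases b <;> simp <;> omega
  -- σ preserves parity
  have hcol : ∀ t : Fin (2*n), (t : ℕ) % 2 = col t % 2 := by
    intro t
    have h2 := (hT t).2
    have hdvd : 2 ∣ ∑ r ∈ Finset.range (row t), 2 * rowLen lam r :=
      Finset.dvd_sum (fun i _ => dvd_mul_right 2 _)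
    omega
  have hpar : ∀ t : Fin (2*n), ((σ t : ℕ)) % 2 = (t : ℕ) % 2 := by
    intro t
    rw [hcol (σ t), hσ t, ← hcol t]
  obtain ⟨τf, hτf⟩ := fiber_perm σ hpar false
  obtain ⟨τt, hτt⟩ := fiber_perm σ hpar true
  have hτf' : ∀ i, σ⁻¹ (EE n (i, false)) = EE n (τf⁻¹ i, false) := by
    intro i
    have h := hτf (τf⁻¹ i)
    rw [Equiv.Perm.apply_inv_self] at h
    rw [← h, Equiv.Perm.inv_apply_self]
  have hτt' : ∀ i, σ⁻¹ (EE n (i, true)) = EE n (τt⁻¹ i, true) := by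
    intro i
    have h := hτt (τt⁻¹ i)
    rw [Equiv.Perm.apply_inv_self] at h
    rw [← h, Equiv.Perm.inv_apply_self]
  set ρ := A * P with hρdef
  set rf := τf * τt⁻¹ with hrfdef
  have hρapp : ∀ x : Fin (2*n), ρ x = σ (P (σ⁻¹ (P x))) := by
    intro x; rfl
  have hρf : ∀ i, ρ (EE n (i, false)) = EE n (rf i, false) := by
    intro i
    rw [hρapp, hPE]
    simp only [Bool.not_false]
    rw [hτt', hPE]
    simp only [Bool.not_true]
    rw [hτf]
    rfl
  have hρt : ∀ i, ρ (EE n (i, true)) = EE n ((τt ((τf)⁻¹ i)), true) := by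
    intro i
    rw [hρapp, hPE]
    simp only [Bool.not_true]
    rw [hτf', hPE]
    simp only [Bool.not_false]
    rw [hτt]
  have hrfinv : ∀ i, rf⁻¹ i = τt (τf⁻¹ i) := by
    intro i
    rw [hrfdef]
    simp
  have hρf' : ∀ i, ρ⁻¹ (EE n (i, false)) = EE n (rf⁻¹ i, false) := by
    intro i
    have h := hρf (rf⁻¹ i)
    rw [Equiv.Perm.apply_inv_self] at h
    rw [← h, Equiv.Perm.inv_apply_self]
  -- integer powers
  have L2 : ∀ (k : ℤ) (i : Fin n), (ρ ^ k) (EE n (i, false)) = EE n ((rf ^ k) i, false) := by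
    intro k
    induction k using Int.induction_on with
    | zero => simp
    | succ k ih =>
      intro i
      rw [zpow_add_one ρ k, Equiv.Perm.mul_apply, hρf, ih, zpow_add_one rf k,
        Equiv.Perm.mul_apply]
      rfl
    | pred k ih =>
      intro i
      rw [zpow_sub_one ρ (-k), Equiv.Perm.mul_apply, hρf', ih, zpow_sub_one rf (-k),
        Equiv.Perm.mul_apply]
  -- projection to Fin n
  set F : Fin (2*n) → Fin n := fun x => ((EE n).symm x).1 with hFdef
  have hFE : ∀ (i : Fin n) (b : Bool), F (EE n (i, b)) = i := by
    intro i b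
    rw [hFdef]
    simp
  have hxE : ∀ x : Fin (2*n), EE n (F x, ((EE n).symm x).2) = x := by
    intro x
    rw [hFdef]
    exact (EE n).apply_symm_apply x
  have hFP : ∀ x : Fin (2*n), F (P x) = F x := by
    intro x
    apply Fin.ext
    rw [hFdef]
    show ((((EE n).symm (P x)).1 : Fin n) : ℕ) = _
    rw [EE_symm_fst, EE_symm_fst, hPapp]
    have := x.isLt
    omega
  -- one step of ρ moves F by rf^{±1}
  have L0 : ∀ x : Fin (2*n), rf.SameCycle (F x) (F (ρ x)) := by
    intro x
    rcases hb : ((EE n).symm x).2 with _ | _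
    · have hx : x = EE n (F x, false) := by rw [← hb, hxE]
      refine ⟨1, ?_⟩
      rw [zpow_one]
      conv_rhs => rw [hx]
      rw [hρf, hFE]
    · have hx : x = EE n (F x, true) := by rw [← hb, hxE]
      refine ⟨-1, ?_⟩
      conv_rhs => rw [hx]
      rw [hρt, hFE, ← hrfinv]
      rfl
  -- all elements of the closure preserve F-orbits of rf
  have hAmem : A ∈ Subgroup.closure ({A, P} : Set (Equiv.Perm (Fin (2*n)))) :=
    Subgroup.subset_closure (Set.mem_insert _ _)
  have hPmem : P ∈ Subgroup.closure ({A, P} : Set (Equiv.Perm (Fin (2*n)))) :=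
    Subgroup.subset_closure (Set.mem_insert_of_mem _ rfl)
  have hρmem : ρ ∈ Subgroup.closure ({A, P} : Set (Equiv.Perm (Fin (2*n)))) :=
    mul_mem hAmem hPmem
  have hArho : ∀ x, A x = ρ (P x) := by
    intro x
    rw [hρapp, hPP]
    rfl
  have L1 : ∀ g ∈ Subgroup.closure ({A, P} : Set (Equiv.Perm (Fin (2*n)))),
      ∀ x, rf.SameCycle (F x) (F (g x)) := by
    intro g hg
    refine Subgroup.closure_induction ?_ ?_ ?_ ?_ hg
    · rintro y (rfl | rfl)
      · intro x
        rw [hArho]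
        have := L0 (P x)
        rwa [hFP] at this
      · intro x
        rw [hFP]
    · intro x
      rw [Equiv.Perm.one_apply]
    · intro a b _ _ ha hb x
      rw [Equiv.Perm.mul_apply]
      exact (hb x).trans (ha (b x))
    · intro a _ ha x
      have := ha (a⁻¹ x)
      rw [Equiv.Perm.apply_inv_self] at this
      exact this.symm
  -- the equivalence between loops and rf-orbits
  have hrelG : ∀ x y : Fin (2*n),
      (MulAction.orbitRel (Subgroup.closure ({A, P} : Set (Equiv.Perm (Fin (2*n)))))
        (Fin (2*n))) x y ↔
      ∃ g ∈ Subgroup.closure ({A, P} : Set (Equiv.Perm (Fin (2*n)))), g y = x := by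
    intro x y
    constructor
    · rintro ⟨⟨g, hg⟩, h⟩
      exact ⟨g, hg, h⟩
    · rintro ⟨g, hg, h⟩
      exact ⟨⟨g, hg⟩, h⟩
  have e2 : Loops A P ≃ MulAction.orbitRel.Quotient (Subgroup.zpowers rf) (Fin n) := by
    refine
      { toFun := Quotient.lift
          (fun x => (⟦F x⟧ : MulAction.orbitRel.Quotient (Subgroup.zpowers rf) (Fin n))) ?_
        invFun := Quotient.lift (fun i => (⟦EE n (i, false)⟧ : Loops A P)) ?_
        left_inv := ?_
        right_inv := ?_ }
    · intro x y hxy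
      obtain ⟨g, hg, rfl⟩ := (hrelG x y).mp hxy
      exact Quotient.sound ((orbitRel_zpowers_iff rf _ _).mpr (L1 g hg y))
    · intro i j hij
      obtain ⟨k, hk⟩ := (orbitRel_zpowers_iff rf i j).mp hij
      refine Quotient.sound ((hrelG _ _).mpr ⟨ρ ^ k, zpow_mem hρmem k, ?_⟩)
      rw [L2, hk]
    · intro q
      induction q using Quotient.ind
      rename_i x
      simp only [Quotient.lift_mk]
      refine Quotient.sound ((hrelG _ _).mpr ?_)
      rcases hb : ((EE n).symm x).2 with _ | _
      · exact ⟨1, one_mem _, by rw [Equiv.Perm.one_apply, ← hb, hxE]⟩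
      · refine ⟨P, hPmem, ?_⟩
        have hx : x = EE n (F x, true) := by rw [← hb, hxE]
        conv_lhs => rw [hx]
        rw [hPE]
        rfl
    · intro q
      induction q using Quotient.ind
      rename_i i
      simp only [Quotient.lift_mk]
      rw [hFE]
  have hnum : numLoops A P = Nat.card (MulAction.orbitRel.Quotient (Subgroup.zpowers rf) (Fin n)) :=
    Nat.card_congr e2
  obtain ⟨hle, hsign⟩ := sign_orbits rf
  rw [Fintype.card_fin] at hle hsign
  -- sign of σ equals sign of rf
  have hστ : σ = (EE n).permCongr (Equiv.prodCongrLeft (fun b => bif b then τt else τf)) := by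
    apply Equiv.ext
    intro x
    rw [Equiv.permCongr_apply]
    rcases hb : ((EE n).symm x).2 with _ | _
    · have hx : x = EE n (F x, false) := by rw [← hb, hxE]
      conv_lhs => rw [hx]
      rw [hτf]
      congr 1
      rw [hx]
      rw [Equiv.symm_apply_apply, Equiv.prodCongrLeft_apply, hFE]
      rfl
    · have hx : x = EE n (F x, true) := by rw [← hb, hxE]
      conv_lhs => rw [hx]
      rw [hτt]
      congr 1
      rw [hx]
      rw [Equiv.symm_apply_apply, Equiv.prodCongrLeft_apply, hFE]
      rfl
  have hsignσ : Equiv.Perm.sign σ = Equiv.Perm.sign τf * Equiv.Perm.sign τt := by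
    rw [hστ, Equiv.Perm.sign_permCongr, Equiv.Perm.sign_prodCongrLeft, Fintype.prod_bool]
    simp [mul_comm]
  have hsignrf : Equiv.Perm.sign rf = Equiv.Perm.sign τf * Equiv.Perm.sign τt := by
    rw [hrfdef, map_mul, map_inv]
    congr 1
    exact inv_eq_of_mul_eq_one_right (Int.units_mul_self _)
  rw [hsignσ, ← hsignrf, hsign, hnum]


end ZonalPP
end

section
/- Let μ be a partition of n and let (S₁,S₂) be a couple of pair-partitions of [2n] of type μ. Then the simultaneous centralizer {σ ∈ S_{2n} : σ∘S₁∘σ⁻¹ = S₁ and σ∘S₂∘σ⁻¹ = S₂} has cardinality exactly z_μ · 2^{ℓ(μ)}. -/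
open scoped BigOperators

namespace ZonalPP
section Dihedral

variable {N : ℕ} {a b : Equiv.Perm (Fin N)}

lemma mul_self_of_invol (ha : Function.Involutive a) : a * a = 1 :=
  Equiv.ext ha

lemma inv_of_invol (ha : Function.Involutive a) : a⁻¹ = a :=
  inv_eq_of_mul_eq_one_right (mul_self_of_invol ha)

lemma a_mul_zpow (ha : Function.Involutive a) (hb : Function.Involutive b) (k : ℤ) :
    a * (a*b)^k = (a*b)^(-k) * a := by
  have conj : a * (a*b) * a⁻¹ = (a*b)⁻¹ := by
    rw [← mul_assoc, mul_self_of_invol ha, one_mul, mul_inv_rev,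
      inv_of_invol ha, inv_of_invol hb]
  have h2 : a * (a*b)^k * a⁻¹ = (a*b)^(-k) := by
    have h3 := map_zpow (MulAut.conj a) (a*b) k
    simp only [MulAut.conj_apply] at h3
    rw [h3, conj, inv_zpow']
  calc a * (a*b)^k = a * (a*b)^k * a⁻¹ * a := by group
    _ = (a*b)^(-k) * a := by rw [h2]

/-- Dihedral normal form for elements of the closure. -/
lemma mem_closure_dihedral (ha : Function.Involutive a) (hb : Function.Involutive b)
    {h : Equiv.Perm (Fin N)} (hh : h ∈ Subgroup.closure ({a, b} : Set (Equiv.Perm (Fin N)))) :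
    ∃ k : ℤ, h = (a*b)^k ∨ h = (a*b)^k * a := by
  induction hh using Subgroup.closure_induction with
  | mem x hx =>
    rcases hx with rfl | rfl
    · exact ⟨0, Or.inr (by simp)⟩
    · refine ⟨-1, Or.inr ?_⟩
      rw [zpow_neg_one, mul_inv_rev, inv_of_invol ha, mul_assoc, mul_self_of_invol ha, mul_one,
        inv_of_invol hb]
  | one => exact ⟨0, Or.inl (by simp)⟩
  | mul x y hx hy ihx ihy =>
    obtain ⟨k, hk | hk⟩ := ihx <;> obtain ⟨m, hm | hm⟩ := ihy <;> subst hk hm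
    · exact ⟨k + m, Or.inl (by rw [zpow_add])⟩
    · exact ⟨k + m, Or.inr (by rw [zpow_add, mul_assoc])⟩
    · refine ⟨k - m, Or.inr ?_⟩
      calc ((a*b)^k * a) * (a*b)^m = (a*b)^k * (a * (a*b)^m) := by group
        _ = (a*b)^k * ((a*b)^(-m) * a) := by rw [a_mul_zpow ha hb]
        _ = (a*b)^(k - m) * a := by rw [← mul_assoc, ← zpow_add, sub_eq_add_neg]
    · refine ⟨k - m, Or.inl ?_⟩
      calc ((a*b)^k * a) * ((a*b)^m * a) = (a*b)^k * (a * (a*b)^m) * a := by group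
        _ = (a*b)^k * ((a*b)^(-m) * a) * a := by rw [a_mul_zpow ha hb]
        _ = (a*b)^k * (a*b)^(-m) * (a * a) := by group
        _ = (a*b)^(k - m) := by
            rw [mul_self_of_invol ha, mul_one, ← zpow_add, sub_eq_add_neg]
  | inv x hx ihx =>
    obtain ⟨k, hk | hk⟩ := ihx <;> subst hk
    · exact ⟨-k, Or.inl (by rw [zpow_neg])⟩
    · refine ⟨k, Or.inr ?_⟩
      rw [mul_inv_rev, inv_of_invol ha, ← inv_zpow, inv_zpow', a_mul_zpow ha hb, neg_neg]

/-- Key: `a x` is never in the `⟨ab⟩`-orbit of `x`. -/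
lemma ax_ne_czpow (ha : Function.Involutive a) (fa : ∀ x, a x ≠ x)
    (hb : Function.Involutive b) (fb : ∀ x, b x ≠ x) (x : Fin N) (k : ℤ) :
    ((a*b)^k) x ≠ a x := by
  set c := a * b with hc
  intro h
  rcases Int.even_or_odd k with ⟨t, ht⟩ | ⟨t, ht⟩
  · apply fa ((c^t) x)
    have e2 : a ((c^t) x) = (c^(-t)) (a x) := by
      show (a * c^t) x = _
      rw [hc, a_mul_zpow ha hb]; rfl
    rw [e2, ← h]
    show (c^(-t) * c^k) x = _
    rw [← zpow_add, show (-t + k : ℤ) = t by omega]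
  · apply fb ((c^t) x)
    have hab : b = a * c := by rw [hc, ← mul_assoc, mul_self_of_invol ha, one_mul]
    have e1 : b ((c^t) x) = a ((c^(t+1)) x) := by
      rw [hab]
      show (a * c * c^t) x = _
      rw [mul_assoc, ← zpow_one_add, show (1+t : ℤ) = t+1 by omega]; rfl
    have e2 : a ((c^(t+1)) x) = (c^(-(t+1))) (a x) := by
      show (a * c^(t+1)) x = _
      rw [hc, a_mul_zpow ha hb]; rfl
    rw [e1, e2, ← h]
    show (c^(-(t+1)) * c^k) x = _
    rw [← zpow_add, show (-(t+1) + k : ℤ) = t by omega]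

lemma mp_pos (σ : Equiv.Perm (Fin N)) (x : Fin N) : 0 < Function.minimalPeriod (⇑σ) x := by
  apply Function.IsPeriodicPt.minimalPeriod_pos (orderOf_pos σ)
  rw [Function.IsPeriodicPt, ← Equiv.Perm.coe_pow, pow_orderOf_eq_one]
  rfl

lemma pow_fix_iff (σ : Equiv.Perm (Fin N)) (x : Fin N) (t : ℕ) :
    (σ^t) x = x ↔ Function.minimalPeriod (⇑σ) x ∣ t := by
  rw [Equiv.Perm.coe_pow]
  exact Function.isPeriodicPt_iff_minimalPeriod_dvd

lemma zpow_fix {σ : Equiv.Perm (Fin N)} {x : Fin N} (h : σ x = x) (q : ℤ) : (σ^q) x = x :=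
  (MulAction.stabilizer (Equiv.Perm (Fin N)) x).zpow_mem (h : σ • x = x) q

lemma zpow_fix_iff (σ : Equiv.Perm (Fin N)) (x : Fin N) (k : ℤ) :
    (σ^k) x = x ↔ (Function.minimalPeriod (⇑σ) x : ℤ) ∣ k := by
  set m := Function.minimalPeriod (⇑σ) x with hm
  constructor
  · intro h
    have hmpos : 0 < m := mp_pos σ x
    have hfixm : (σ^((m:ℤ)*(k / m))) x = x := by
      rw [zpow_mul, zpow_natCast]
      exact zpow_fix ((pow_fix_iff σ x m).mpr dvd_rfl) _
    have hr : (σ^(k % (m:ℤ))) x = x := by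
      have : (σ^(k % (m:ℤ))) x = (σ^(k % (m:ℤ))) ((σ^((m:ℤ)*(k / m))) x) := by rw [hfixm]
      rw [this, ← Equiv.Perm.mul_apply, ← zpow_add, Int.emod_add_mul_ediv, h]
    have hnn : 0 ≤ k % (m:ℤ) := Int.emod_nonneg k (by positivity)
    have hlt : k % (m:ℤ) < m := Int.emod_lt_of_pos k (by positivity)
    have : (σ^((k % (m:ℤ)).toNat)) x = x := by
      rw [← zpow_natCast, Int.toNat_of_nonneg hnn]; exact hr
    have hdvd := (pow_fix_iff σ x _).mp this
    have : (k % (m:ℤ)).toNat = 0 := Nat.eq_zero_of_dvd_of_lt hdvd (by omega)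
    have : k % (m:ℤ) = 0 := by omega
    exact Int.dvd_of_emod_eq_zero this
  · rintro ⟨q, rfl⟩
    rw [zpow_mul, zpow_natCast]
    exact zpow_fix ((pow_fix_iff σ x m).mpr dvd_rfl) _

variable (a b) in
/-- The `⟨ab⟩`-orbit of `x`. -/
def cOrb (x : Fin N) : Set (Fin N) := {y | ∃ k : ℤ, ((a*b)^k) x = y}

lemma card_cOrb (x : Fin N) :
    Nat.card (cOrb a b x) = Function.minimalPeriod (⇑(a*b)) x := by
  set c := a * b with hc
  set m := Function.minimalPeriod (⇑c) x with hm
  have hmpos : 0 < m := mp_pos c x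
  have hset : cOrb a b x = ↑((Finset.range m).image fun t => (c^t) x) := by
    ext y
    simp only [Finset.coe_image, Finset.coe_range, Set.mem_image, Set.mem_Iio, cOrb,
      Set.mem_setOf_eq]
    constructor
    · rintro ⟨k, rfl⟩
      set d := orderOf c with hd
      have hdpos : 0 < d := orderOf_pos c
      have h1 : (c:Equiv.Perm (Fin N))^k = c^((k % (d:ℤ)).toNat) := by
        rw [← zpow_natCast, Int.toNat_of_nonneg (Int.emod_nonneg k (by positivity)),
          zpow_mod_orderOf]
      refine ⟨(k % (d:ℤ)).toNat % m, Nat.mod_lt _ hmpos, ?_⟩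
      rw [h1, Equiv.Perm.coe_pow, Equiv.Perm.coe_pow]
      exact Function.iterate_mod_minimalPeriod_eq
    · rintro ⟨t, ht, rfl⟩
      exact ⟨(t:ℤ), by rw [zpow_natCast]⟩
  rw [hset, Nat.card_coe_set_eq, Set.ncard_coe_finset, Finset.card_image_of_injOn, Finset.card_range]
  intro s hs t ht hst
  simp only [Finset.coe_range, Set.mem_Iio] at hs ht
  simp only at hst
  have hval : (⇑c)^[s] x = (⇑c)^[t] x := by
    rw [← Equiv.Perm.coe_pow, ← Equiv.Perm.coe_pow]; exact hst
  exact Function.iterate_injOn_Iio_minimalPeriod hs ht hval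

lemma cOrb_ax (ha : Function.Involutive a) (hb : Function.Involutive b) (x : Fin N) :
    cOrb a b (a x) = ⇑a '' cOrb a b x := by
  set c := a * b with hc
  ext y
  constructor
  · rintro ⟨k, rfl⟩
    refine ⟨(c^(-k)) x, ⟨-k, rfl⟩, ?_⟩
    show (a * c^(-k)) x = _
    rw [hc, a_mul_zpow ha hb, neg_neg]; rfl
  · rintro ⟨z, ⟨k, rfl⟩, rfl⟩
    refine ⟨-k, ?_⟩
    show _ = (a * c^k) x
    rw [hc, a_mul_zpow ha hb]; rfl

lemma cOrb_disjoint (ha : Function.Involutive a) (fa : ∀ x, a x ≠ x)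
    (hb : Function.Involutive b) (fb : ∀ x, b x ≠ x) (x : Fin N) :
    Disjoint (cOrb a b x) (cOrb a b (a x)) := by
  set c := a * b with hc
  rw [Set.disjoint_left]
  rintro y ⟨k, rfl⟩ ⟨t, hty⟩
  apply ax_ne_czpow ha fa hb fb x (k - t)
  have : (c^(-t)) ((c^t) (a x)) = (c^(-t)) ((c^k) x) := by rw [hty]
  calc (c^(k-t)) x = (c^(-t) * c^k) x := by rw [← zpow_add, neg_add_eq_sub]
    _ = (c^(-t)) ((c^k) x) := rfl
    _ = (c^(-t)) ((c^t) (a x)) := this.symm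
    _ = (c^(-t) * c^t) (a x) := rfl
    _ = a x := by rw [← zpow_add, neg_add_cancel, zpow_zero]; rfl

lemma orbit_eq (ha : Function.Involutive a) (hb : Function.Involutive b) (x : Fin N) :
    MulAction.orbit (Subgroup.closure ({a, b} : Set (Equiv.Perm (Fin N)))) x
      = cOrb a b x ∪ cOrb a b (a x) := by
  have hamem : a ∈ Subgroup.closure ({a, b} : Set (Equiv.Perm (Fin N))) :=
    Subgroup.subset_closure (by simp)
  have hbmem : b ∈ Subgroup.closure ({a, b} : Set (Equiv.Perm (Fin N))) :=
    Subgroup.subset_closure (by simp)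
  ext y
  constructor
  · rintro ⟨⟨h, hh⟩, rfl⟩
    obtain ⟨k, rfl | rfl⟩ := mem_closure_dihedral ha hb hh
    · exact Or.inl ⟨k, rfl⟩
    · exact Or.inr ⟨k, rfl⟩
  · rintro (⟨k, rfl⟩ | ⟨k, rfl⟩)
    · exact ⟨⟨(a*b)^k, Subgroup.zpow_mem _ (mul_mem hamem hbmem) k⟩, rfl⟩
    · exact ⟨⟨(a*b)^k * a, mul_mem (Subgroup.zpow_mem _ (mul_mem hamem hbmem) k) hamem⟩, rfl⟩

lemma card_orbit (ha : Function.Involutive a) (fa : ∀ x, a x ≠ x)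
    (hb : Function.Involutive b) (fb : ∀ x, b x ≠ x) (x : Fin N) :
    Nat.card (MulAction.orbit (Subgroup.closure ({a, b} : Set (Equiv.Perm (Fin N)))) x)
      = 2 * Function.minimalPeriod (⇑(a*b)) x := by
  rw [orbit_eq ha hb, Nat.card_coe_set_eq,
    Set.ncard_union_eq (cOrb_disjoint ha fa hb fb x) (Set.toFinite _) (Set.toFinite _),
    cOrb_ax ha hb, Set.ncard_image_of_injective _ a.injective,
    ← Nat.card_coe_set_eq, card_cOrb, two_mul]

lemma fix_transfer (ha : Function.Involutive a) (fa : ∀ x, a x ≠ x)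
    (hb : Function.Involutive b) (fb : ∀ x, b x ≠ x) {x x' : Fin N}
    (hcard : Nat.card (MulAction.orbit (Subgroup.closure ({a, b} : Set (Equiv.Perm (Fin N)))) x)
      = Nat.card (MulAction.orbit (Subgroup.closure ({a, b} : Set (Equiv.Perm (Fin N)))) x'))
    {h : Equiv.Perm (Fin N)} (hh : h ∈ Subgroup.closure ({a, b} : Set (Equiv.Perm (Fin N))))
    (hfix : h x = x) : h x' = x' := by
  rw [card_orbit ha fa hb fb, card_orbit ha fa hb fb] at hcard
  have hm : Function.minimalPeriod (⇑(a*b)) x = Function.minimalPeriod (⇑(a*b)) x' := by omega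
  obtain ⟨k, rfl | rfl⟩ := mem_closure_dihedral ha hb hh
  · rw [zpow_fix_iff] at hfix ⊢
    rw [← hm]; exact hfix
  · exfalso
    apply ax_ne_czpow ha fa hb fb x (-k)
    have h0 : ((a*b)^(-k)) (((a*b)^k * a) x) = ((a*b)^(-k)) x := by rw [hfix]
    calc ((a*b)^(-k)) x = ((a*b)^(-k)) (((a*b)^k) (a x)) := h0.symm
      _ = ((a*b)^(-k) * (a*b)^k) (a x) := rfl
      _ = a x := by rw [← zpow_add, neg_add_cancel, zpow_zero]; rfl

lemma mem_orbit_closure_iff {G : Subgroup (Equiv.Perm (Fin N))} {x y : Fin N} :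
    y ∈ MulAction.orbit G x ↔ ∃ g ∈ G, g x = y := by
  constructor
  · rintro ⟨⟨g, hg⟩, rfl⟩; exact ⟨g, hg, rfl⟩
  · rintro ⟨g, hg, rfl⟩; exact ⟨⟨g, hg⟩, rfl⟩

lemma mk_eq_iff {x y : Fin N} :
    (Quotient.mk'' x : Loops a b) = Quotient.mk'' y
      ↔ x ∈ MulAction.orbit (Subgroup.closure ({a, b} : Set (Equiv.Perm (Fin N)))) y := by
  rw [Quotient.eq'']
  exact MulAction.orbitRel_apply

lemma loopSet_out (q : Loops a b) :
    loopSet q = MulAction.orbit (Subgroup.closure ({a, b} : Set (Equiv.Perm (Fin N))))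
      (Quotient.out q) :=
  MulAction.orbitRel.Quotient.orbit_eq_orbit_out q Quotient.out_eq'

lemma fix_transfer₂ (ha : Function.Involutive a) (fa : ∀ x, a x ≠ x)
    (hb : Function.Involutive b) (fb : ∀ x, b x ≠ x) {x x' : Fin N}
    (hcard : Nat.card (MulAction.orbit (Subgroup.closure ({a, b} : Set (Equiv.Perm (Fin N)))) x)
      = Nat.card (MulAction.orbit (Subgroup.closure ({a, b} : Set (Equiv.Perm (Fin N)))) x'))
    {g g' : Equiv.Perm (Fin N)} (hg : g ∈ Subgroup.closure ({a, b} : Set (Equiv.Perm (Fin N))))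
    (hg' : g' ∈ Subgroup.closure ({a, b} : Set (Equiv.Perm (Fin N))))
    (heq : g x = g' x) : g x' = g' x' := by
  have h1 : (g'⁻¹ * g) x = x := by
    have := congrArg (⇑g'⁻¹) heq
    simpa using this
  have h2 := fix_transfer ha fa hb fb hcard (mul_mem (inv_mem hg') hg) h1
  have := congrArg (⇑g') h2
  simpa using this

lemma centralizer_comm {σ : Equiv.Perm (Fin N)} (h1 : σ * a = a * σ) (h2 : σ * b = b * σ)
    {h : Equiv.Perm (Fin N)} (hh : h ∈ Subgroup.closure ({a, b} : Set (Equiv.Perm (Fin N)))) :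
    σ * h = h * σ := by
  have hle : Subgroup.closure ({a, b} : Set (Equiv.Perm (Fin N)))
      ≤ Subgroup.centralizer {σ} := by
    rw [Subgroup.closure_le]
    rintro x (rfl | rfl)
    · exact Subgroup.mem_centralizer_iff.mpr (by rintro y rfl; exact h1)
    · exact Subgroup.mem_centralizer_iff.mpr (by rintro y rfl; exact h2)
  exact Subgroup.mem_centralizer_iff.mp (hle hh) σ rfl

lemma orbit_image_comm {σ : Equiv.Perm (Fin N)}
    (hcomm : ∀ h ∈ Subgroup.closure ({a, b} : Set (Equiv.Perm (Fin N))), σ * h = h * σ)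
    (x : Fin N) :
    MulAction.orbit (Subgroup.closure ({a, b} : Set (Equiv.Perm (Fin N)))) (σ x)
      = ⇑σ '' MulAction.orbit (Subgroup.closure ({a, b} : Set (Equiv.Perm (Fin N)))) x := by
  have key : ∀ g ∈ Subgroup.closure ({a, b} : Set (Equiv.Perm (Fin N))),
      ∀ z : Fin N, g (σ z) = σ (g z) := by
    intro g hg z
    have h := hcomm g hg
    calc g (σ z) = (g * σ) z := rfl
      _ = (σ * g) z := by rw [h]
      _ = σ (g z) := rfl
  ext y
  rw [mem_orbit_closure_iff]
  constructor
  · rintro ⟨g, hg, rfl⟩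
    exact ⟨g x, mem_orbit_closure_iff.mpr ⟨g, hg, rfl⟩, (key g hg x).symm⟩
  · rintro ⟨z, hz, rfl⟩
    obtain ⟨g, hg, rfl⟩ := mem_orbit_closure_iff.mp hz
    exact ⟨g, hg, key g hg x⟩

/-- The centralizer of the pair is in bijection with size-preserving loop assignments. -/
theorem card_centralizer_eq (ha : Function.Involutive a) (fa : ∀ x, a x ≠ x)
    (hb : Function.Involutive b) (fb : ∀ x, b x ≠ x) :
    Nat.card {σ : Equiv.Perm (Fin N) // σ * a = a * σ ∧ σ * b = b * σ}
      = Nat.card {y : Loops a b → Fin N //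
          (∀ q, Nat.card (MulAction.orbit
              (Subgroup.closure ({a, b} : Set (Equiv.Perm (Fin N)))) (y q))
            = Nat.card (loopSet q)) ∧
          Function.Injective (fun q => (Quotient.mk'' (y q) : Loops a b))} := by
  classical
  set H := Subgroup.closure ({a, b} : Set (Equiv.Perm (Fin N))) with hH
  have hamem : a ∈ H := Subgroup.subset_closure (by simp)
  have hbmem : b ∈ H := Subgroup.subset_closure (by simp)
  have hout : ∀ q : Loops a b, (Quotient.mk'' (Quotient.out q) : Loops a b) = q :=
    fun q => Quotient.out_eq' q
  have hmemself : ∀ x : Fin N, ∃ g ∈ H, g (Quotient.out (Quotient.mk'' x : Loops a b)) = x := by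
    intro x
    exact mem_orbit_closure_iff.mp (mk_eq_iff.mp (hout (Quotient.mk'' x)).symm)
  have phi_mem : ∀ σ : Equiv.Perm (Fin N), σ * a = a * σ → σ * b = b * σ →
      (∀ q : Loops a b, Nat.card (MulAction.orbit H (σ (Quotient.out q)))
          = Nat.card (loopSet q)) ∧
      Function.Injective (fun q : Loops a b =>
        (Quotient.mk'' (σ (Quotient.out q)) : Loops a b)) := by
    intro σ h1 h2
    have hcomm := fun h hh => centralizer_comm h1 h2 (h := h) hh
    constructor
    · intro q
      rw [orbit_image_comm hcomm, loopSet_out, Nat.card_coe_set_eq, Nat.card_coe_set_eq,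
        Set.ncard_image_of_injective _ σ.injective]
    · intro q q' hqq'
      simp only at hqq'
      have hm : σ (Quotient.out q) ∈ MulAction.orbit H (σ (Quotient.out q')) := mk_eq_iff.mp hqq'
      rw [orbit_image_comm hcomm] at hm
      obtain ⟨z, hz, hz2⟩ := hm
      have hzz : Quotient.out q = z := σ.injective hz2.symm
      subst hzz
      rw [← hout q, ← hout q']
      exact mk_eq_iff.mpr hz
  apply Nat.card_eq_of_bijective
    (fun σC => ⟨fun q => σC.1 (Quotient.out q), phi_mem σC.1 σC.2.1 σC.2.2⟩)
  constructor
  · -- injective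
    rintro ⟨σ, hσ1, hσ2⟩ ⟨τ, hτ1, hτ2⟩ h
    have hvals : ∀ q : Loops a b, σ (Quotient.out q) = τ (Quotient.out q) :=
      fun q => congrFun (congrArg Subtype.val h) q
    refine Subtype.ext (Equiv.ext fun x => ?_)
    obtain ⟨g, hg, hgx⟩ := hmemself x
    have e1 : σ x = g (σ (Quotient.out (Quotient.mk'' x : Loops a b))) := by
      conv_lhs => rw [← hgx]
      calc σ (g (Quotient.out (Quotient.mk'' x : Loops a b)))
          = (σ * g) (Quotient.out (Quotient.mk'' x : Loops a b)) := rfl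
        _ = (g * σ) (Quotient.out (Quotient.mk'' x : Loops a b)) := by
            rw [centralizer_comm hσ1 hσ2 hg]
        _ = g (σ (Quotient.out (Quotient.mk'' x : Loops a b))) := rfl
    have e2 : τ x = g (τ (Quotient.out (Quotient.mk'' x : Loops a b))) := by
      conv_lhs => rw [← hgx]
      calc τ (g (Quotient.out (Quotient.mk'' x : Loops a b)))
          = (τ * g) (Quotient.out (Quotient.mk'' x : Loops a b)) := rfl
        _ = (g * τ) (Quotient.out (Quotient.mk'' x : Loops a b)) := by
            rw [centralizer_comm hτ1 hτ2 hg]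
        _ = g (τ (Quotient.out (Quotient.mk'' x : Loops a b))) := rfl
    rw [e1, e2, hvals]
  · -- surjective
    rintro ⟨y, hy1, hy2⟩
    choose gf hgf hspec using hmemself
    have htrans : ∀ (q : Loops a b) (g g' : Equiv.Perm (Fin N)), g ∈ H → g' ∈ H →
        g (Quotient.out q) = g' (Quotient.out q) → g (y q) = g' (y q) := by
      intro q g g' hg hg' heq
      apply fix_transfer₂ ha fa hb fb _ hg hg' heq
      rw [← loopSet_out q, hy1 q]
    have htrans' : ∀ (q : Loops a b) (g g' : Equiv.Perm (Fin N)), g ∈ H → g' ∈ H →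
        g (y q) = g' (y q) → g (Quotient.out q) = g' (Quotient.out q) := by
      intro q g g' hg hg' heq
      apply fix_transfer₂ ha fa hb fb _ hg hg' heq
      rw [← loopSet_out q, hy1 q]
    set f : Fin N → Fin N := fun x => gf x (y (Quotient.mk'' x)) with hf
    have hinj : Function.Injective f := by
      intro x x' hxx'
      have hq : (Quotient.mk'' x : Loops a b) = Quotient.mk'' x' := by
        apply hy2
        have h1 : (Quotient.mk'' (f x) : Loops a b) = Quotient.mk'' (y (Quotient.mk'' x)) :=
          mk_eq_iff.mpr (mem_orbit_closure_iff.mpr ⟨gf x, hgf x, rfl⟩)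
        have h2 : (Quotient.mk'' (f x') : Loops a b) = Quotient.mk'' (y (Quotient.mk'' x')) :=
          mk_eq_iff.mpr (mem_orbit_closure_iff.mpr ⟨gf x', hgf x', rfl⟩)
        show (Quotient.mk'' (y (Quotient.mk'' x)) : Loops a b) = Quotient.mk'' (y (Quotient.mk'' x'))
        rw [← h1, ← h2, hxx']
      have heq : gf x (y (Quotient.mk'' x)) = gf x' (y (Quotient.mk'' x)) := by
        conv_rhs => rw [hq]
        exact hxx'
      have hout' := htrans' (Quotient.mk'' x) (gf x) (gf x') (hgf x) (hgf x') heq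
      have s1 := hspec x
      have s2 := hspec x'
      rw [← hq] at s2
      rw [s1, s2] at hout'
      exact hout'
    have hbij := Finite.injective_iff_bijective.mp hinj
    refine ⟨⟨Equiv.ofBijective f hbij, ?_, ?_⟩, ?_⟩
    · -- commutes with a
      refine Equiv.ext fun x => ?_
      show f (a x) = a (f x)
      have hq : (Quotient.mk'' (a x) : Loops a b) = Quotient.mk'' x :=
        mk_eq_iff.mpr (mem_orbit_closure_iff.mpr ⟨a, hamem, rfl⟩)
      have e1 : gf (a x) (Quotient.out (Quotient.mk'' x : Loops a b))
          = (a * gf x) (Quotient.out (Quotient.mk'' x : Loops a b)) := by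
        show _ = a (gf x _)
        rw [hspec x]
        have hs := hspec (a x)
        rw [hq] at hs
        exact hs
      have ht := htrans (Quotient.mk'' x) (gf (a x)) (a * gf x) (hgf (a x))
        (mul_mem hamem (hgf x)) e1
      show gf (a x) (y (Quotient.mk'' (a x))) = a (gf x (y (Quotient.mk'' x)))
      rw [hq, ht]
      rfl
    · -- commutes with b
      refine Equiv.ext fun x => ?_
      show f (b x) = b (f x)
      have hq : (Quotient.mk'' (b x) : Loops a b) = Quotient.mk'' x :=
        mk_eq_iff.mpr (mem_orbit_closure_iff.mpr ⟨b, hbmem, rfl⟩)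
      have e1 : gf (b x) (Quotient.out (Quotient.mk'' x : Loops a b))
          = (b * gf x) (Quotient.out (Quotient.mk'' x : Loops a b)) := by
        show _ = b (gf x _)
        rw [hspec x]
        have hs := hspec (b x)
        rw [hq] at hs
        exact hs
      have ht := htrans (Quotient.mk'' x) (gf (b x)) (b * gf x) (hgf (b x))
        (mul_mem hbmem (hgf x)) e1
      show gf (b x) (y (Quotient.mk'' (b x))) = b (gf x (y (Quotient.mk'' x)))
      rw [hq, ht]
      rfl
    · -- maps to y
      apply Subtype.ext
      funext q
      show f (Quotient.out q) = y q
      have e1 : gf (Quotient.out q) (Quotient.out q) = (1 : Equiv.Perm (Fin N)) (Quotient.out q) := by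
        have hs := hspec (Quotient.out q)
        rw [hout q] at hs
        rw [hs]
        rfl
      have ht := htrans q (gf (Quotient.out q)) 1 (hgf (Quotient.out q)) (one_mem H) e1
      show gf (Quotient.out q) (y (Quotient.mk'' (Quotient.out q))) = y q
      rw [hout q, ht]
      rfl

lemma mem_loopSet_iff {x : Fin N} {q : Loops a b} :
    x ∈ loopSet q ↔ (Quotient.mk'' x : Loops a b) = q :=
  MulAction.orbitRel.Quotient.mem_orbit

theorem card_assignments (a b : Equiv.Perm (Fin N)) :
    Nat.card {y : Loops a b → Fin N //
        (∀ q, Nat.card (MulAction.orbit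
            (Subgroup.closure ({a, b} : Set (Equiv.Perm (Fin N)))) (y q))
          = Nat.card (loopSet q)) ∧
        Function.Injective (fun q => (Quotient.mk'' (y q) : Loops a b))}
      = (∏ i ∈ Finset.image (fun q : Loops a b => Nat.card (loopSet q)) Finset.univ,
          (Fintype.card {q : Loops a b // Nat.card (loopSet q) = i}).factorial)
        * ∏ q : Loops a b, Nat.card (loopSet q) := by
  classical
  set sz : Loops a b → ℕ := fun q => Nat.card (loopSet q) with hsz
  have key : ∀ (y : Loops a b → Fin N), (∀ q, Nat.card (MulAction.orbit
      (Subgroup.closure ({a, b} : Set (Equiv.Perm (Fin N)))) (y q)) = Nat.card (loopSet q))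
      ↔ (∀ q, sz (Quotient.mk'' (y q) : Loops a b) = sz q) := fun y => Iff.rfl
  have hΦmem : ∀ (pw : {π : Equiv.Perm (Loops a b) // ∀ q, sz (π q) = sz q}
        × ((q : Loops a b) → ↥(loopSet q))),
      (∀ q, Nat.card (MulAction.orbit
          (Subgroup.closure ({a, b} : Set (Equiv.Perm (Fin N)))) ((pw.2 (pw.1.1 q)).1))
        = Nat.card (loopSet q)) ∧
      Function.Injective (fun q => (Quotient.mk'' ((pw.2 (pw.1.1 q)).1) : Loops a b)) := by
    rintro ⟨⟨π, hπ⟩, w⟩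
    have hfn : (fun q => (Quotient.mk'' ((w (π q)).1) : Loops a b)) = ⇑π :=
      funext fun q => mem_loopSet_iff.mp (w (π q)).2
    constructor
    · intro q
      show sz (Quotient.mk'' ((w (π q)).1) : Loops a b) = sz q
      rw [congrFun hfn q]
      exact hπ q
    · rw [hfn]
      exact π.injective
  have hbij : Function.Bijective
      (fun pw : {π : Equiv.Perm (Loops a b) // ∀ q, sz (π q) = sz q}
          × ((q : Loops a b) → ↥(loopSet q)) =>
        (⟨fun q => (pw.2 (pw.1.1 q)).1, hΦmem pw⟩ :
          {y : Loops a b → Fin N //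
            (∀ q, Nat.card (MulAction.orbit
                (Subgroup.closure ({a, b} : Set (Equiv.Perm (Fin N)))) (y q))
              = Nat.card (loopSet q)) ∧
            Function.Injective (fun q => (Quotient.mk'' (y q) : Loops a b))})) := by
    constructor
    · rintro ⟨⟨π, hπ⟩, w⟩ ⟨⟨π', hπ'⟩, w'⟩ h
      have hvals : ∀ q, (w (π q)).1 = (w' (π' q)).1 :=
        fun q => congrFun (congrArg Subtype.val h) q
      have hππ' : π = π' := by
        apply Equiv.ext
        intro q
        rw [← mem_loopSet_iff.mp (w (π q)).2, ← mem_loopSet_iff.mp (w' (π' q)).2, hvals]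
      subst hππ'
      have hw : w = w' := by
        funext q
        obtain ⟨q', rfl⟩ := π.surjective q
        exact Subtype.ext (hvals q')
      subst hw
      rfl
    · rintro ⟨y, hy1, hy2⟩
      have hb2 : Function.Bijective (fun q => (Quotient.mk'' (y q) : Loops a b)) :=
        Finite.injective_iff_bijective.mp hy2
      set π : Equiv.Perm (Loops a b) := Equiv.ofBijective _ hb2 with hπdef
      have hπapp : ∀ q, π q = Quotient.mk'' (y q) := fun q => rfl
      have hpres : ∀ q, sz (π q) = sz q := by
        intro q
        rw [hπapp]
        exact hy1 q
      have hwmem : ∀ q, y (π.symm q) ∈ loopSet q := by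
        intro q
        rw [mem_loopSet_iff, ← hπapp]
        exact π.apply_symm_apply q
      refine ⟨⟨⟨π, hpres⟩, fun q => ⟨y (π.symm q), hwmem q⟩⟩, ?_⟩
      apply Subtype.ext
      funext q
      show y (π.symm (π q)) = y q
      rw [Equiv.symm_apply_apply]
  rw [← Nat.card_eq_of_bijective _ hbij, Nat.card_prod, Nat.card_pi]
  congr 1
  have e2 : {π : Equiv.Perm (Loops a b) // ∀ q, sz (π q) = sz q}
      ≃ {π : Equiv.Perm (Loops a b) // sz ∘ ⇑π = sz} :=
    Equiv.subtypeEquivRight (fun π => by rw [funext_iff]; rfl)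
  rw [Nat.card_congr e2, Nat.card_eq_fintype_card]
  exact DomMulAct.stabilizer_card' sz

end Dihedral
end ZonalPP

namespace ZonalPP

/-- The simultaneous centralizer of a couple of pair-partitions of type `μ`
has cardinality `z_μ · 2^{ℓ(μ)}`. -/
theorem statement4 {n : ℕ} (μ : Nat.Partition n) (S1 S2 : Equiv.Perm (Fin (2*n)))
    (h1 : IsPairPartition S1) (h2 : IsPairPartition S2)
    (hμ : loopType S1 S2 = μ.parts) :
    Nat.card {σ : Equiv.Perm (Fin (2*n)) // σ * S1 * σ⁻¹ = S1 ∧ σ * S2 * σ⁻¹ = S2} =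
      zMu μ * 2 ^ μ.parts.card := by
  classical
  obtain ⟨ha, fa⟩ := h1
  obtain ⟨hb, fb⟩ := h2
  have step1 : Nat.card {σ : Equiv.Perm (Fin (2*n)) // σ * S1 * σ⁻¹ = S1 ∧ σ * S2 * σ⁻¹ = S2}
      = Nat.card {σ : Equiv.Perm (Fin (2*n)) // σ * S1 = S1 * σ ∧ σ * S2 = S2 * σ} := by
    apply Nat.card_congr
    apply Equiv.subtypeEquivRight
    intro σ
    rw [mul_inv_eq_iff_eq_mul, mul_inv_eq_iff_eq_mul]
  rw [step1, card_centralizer_eq ha fa hb fb, card_assignments S1 S2]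
  -- arithmetic
  set sz : Loops S1 S2 → ℕ := fun q => Nat.card (loopSet q) with hszdef
  set hf : Loops S1 S2 → ℕ := fun q => sz q / 2 with hfdef
  have heven : ∀ q : Loops S1 S2, sz q = 2 * hf q := by
    intro q
    have := loopSet_out (a := S1) (b := S2) q
    have hco := card_orbit ha fa hb fb (Quotient.out q)
    have h2 : sz q = 2 * Function.minimalPeriod (⇑(S1*S2)) (Quotient.out q) := by
      rw [hszdef]
      simp only
      rw [this, hco]
    rw [hfdef]
    simp only
    omega
  have hparts : Multiset.map hf Finset.univ.val = μ.parts := hμ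
  have hcardL : Fintype.card (Loops S1 S2) = Multiset.card μ.parts := by
    rw [← hparts, Multiset.card_map]
    exact Finset.card_univ.symm
  have hB : ∏ q : Loops S1 S2, sz q = 2 ^ Multiset.card μ.parts * μ.parts.prod := by
    calc ∏ q : Loops S1 S2, sz q = ∏ q : Loops S1 S2, 2 * hf q :=
          Finset.prod_congr rfl (fun q _ => heven q)
      _ = (∏ _q : Loops S1 S2, 2) * ∏ q : Loops S1 S2, hf q := Finset.prod_mul_distrib
      _ = 2 ^ Multiset.card μ.parts * μ.parts.prod := by
          rw [Finset.prod_const, Finset.card_univ, hcardL, ← hparts,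
            Finset.prod_eq_multiset_prod]
  have hA : (∏ i ∈ Finset.image sz Finset.univ,
        (Fintype.card {q : Loops S1 S2 // sz q = i}).factorial)
      = ∏ i ∈ μ.parts.toFinset, (Multiset.count i μ.parts).factorial := by
    have himg : Finset.image sz Finset.univ
        = Finset.image (fun j => 2 * j) (Finset.image hf Finset.univ) := by
      rw [Finset.image_image]
      apply Finset.image_congr
      intro q _
      exact heven q
    rw [himg, Finset.prod_image (fun x _ y _ h => by omega)]
    have htf : μ.parts.toFinset = Finset.image hf Finset.univ := by
      rw [← hparts, Multiset.toFinset_map, Finset.val_toFinset]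
    rw [htf]
    apply Finset.prod_congr rfl
    intro j _
    congr 1
    have hc1 : Fintype.card {q : Loops S1 S2 // sz q = 2 * j}
        = Fintype.card {q : Loops S1 S2 // hf q = j} := by
      apply Fintype.card_congr
      apply Equiv.subtypeEquivRight
      intro q
      rw [heven q]
      omega
    rw [hc1, ← hparts, Fintype.card_subtype, Multiset.count_map, Finset.card_def,
      Finset.filter_val]
    congr 1
    exact Multiset.filter_congr (fun q _ => eq_comm)
  rw [hA, hB, zMu]
  ring
end ZonalPP
end

section
/- Let d, n ≥ 1, let X be a real d×d matrix and set A = X·Xᵀ. Let P be a pair-partition of [2n] and let S be the first pair-partition of [2n] (pairing 2i−1 with 2i). Then the sum, over all functions i : {1,…,2n} → {1,…,d} satisfying i∘P = i, of the products ∏_{k=1}^{n} A_{i(2k−1), i(2k)}, equals the product over the loops O ∈ L(P,S) of Tr(A^{|O|/2}), where |O| denotes the (even) cardinality of the orbit O. -/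
open scoped BigOperators

open BigOperators Finset Function

section Pre
variable {d : ℕ} {A : Matrix (Fin d) (Fin d) ℝ}


lemma pow_apply_walk : ∀ (t : ℕ) (a b : Fin d),
    (A ^ (t+1)) a b = ∑ v : Fin t → Fin d,
      ∏ k : Fin (t+1), A ((Fin.cons a v : Fin (t+1) → Fin d) k) ((Fin.snoc v b : Fin (t+1) → Fin d) k) := by
  intro t
  induction t with
  | zero =>
    intro a b
    simp [Fin.snoc]
  | succ t ih =>
    intro a b
    rw [pow_succ', Matrix.mul_apply]
    simp_rw [ih]
    rw [← (Fin.consEquiv (fun _ : Fin (t+1) => Fin d)).sum_comp, Fintype.sum_prod_type]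
    refine Finset.sum_congr rfl fun c _ => ?_
    rw [Finset.mul_sum]
    refine Finset.sum_congr rfl fun w _ => ?_
    show A a c * ∏ k : Fin (t+1), A ((Fin.cons c w : Fin (t+1) → Fin d) k)
          ((Fin.snoc w b : Fin (t+1) → Fin d) k)
        = ∏ k : Fin (t+2), A ((Fin.cons a (Fin.cons c w) : Fin (t+2) → Fin d) k)
          ((Fin.snoc (Fin.cons c w) b : Fin (t+2) → Fin d) k)
    have hcs : (Fin.snoc (Fin.cons c w) b : Fin (t+2) → Fin d)
        = Fin.cons c (Fin.snoc w b) := (Fin.cons_snoc_eq_snoc_cons c w b).symm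
    rw [hcs]
    conv_rhs => rw [Fin.prod_univ_succ]
    simp only [Fin.cons_zero, Fin.cons_succ]

lemma cycleSum (m : ℕ) (hm : m ≠ 0) :
    ∑ v : Fin m → Fin d, ∏ k : Fin m, A (v k) (v ⟨((k:ℕ)+1) % m, Nat.mod_lt _ (Nat.pos_of_ne_zero hm)⟩)
      = (A ^ m).trace := by
  obtain ⟨t, rfl⟩ : ∃ t, m = t + 1 := ⟨m - 1, by omega⟩
  rw [Matrix.trace]
  simp only [Matrix.diag_apply]
  simp_rw [pow_apply_walk t]
  rw [← (Fin.consEquiv (fun _ : Fin (t+1) => Fin d)).sum_comp, Fintype.sum_prod_type]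
  refine Finset.sum_congr rfl fun a _ => ?_
  refine Finset.sum_congr rfl fun w _ => ?_
  show ∏ k : Fin (t+1), A ((Fin.cons a w : Fin (t+1) → Fin d) k)
        ((Fin.cons a w : Fin (t+1) → Fin d) ⟨((k:ℕ)+1) % (t+1), Nat.mod_lt _ (by omega)⟩) = _
  refine Finset.prod_congr rfl fun k _ => ?_
  congr 1
  rcases Nat.lt_or_ge ((k:ℕ)+1) (t+1) with h | h
  · have hk : (k:ℕ) < t := by omega
    have e1 : (⟨((k:ℕ)+1) % (t+1), Nat.mod_lt _ (by omega)⟩ : Fin (t+1))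
        = Fin.succ ⟨(k:ℕ), hk⟩ := by
      ext; simp [Nat.mod_eq_of_lt h]
    rw [e1, Fin.cons_succ]
    exact (Fin.snoc_castSucc (α := fun _ => Fin d) (p := w) (x := a) (i := ⟨(k:ℕ), hk⟩)).symm
  · have hk : (k:ℕ) = t := by omega
    have h1 : ((k:ℕ)+1) % (t+1) = 0 := by rw [hk]; exact Nat.mod_self _
    have e1 : (⟨((k:ℕ)+1) % (t+1), Nat.mod_lt _ (by omega)⟩ : Fin (t+1)) = 0 := by
      ext; simp [h1]
    rw [e1, Fin.cons_zero]
    have e2 : k = Fin.last t := by ext; simp [hk]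
    rw [e2, Fin.snoc_last]


lemma prod_transversal {γ : Type*} [Fintype γ] [DecidableEq γ] (s : γ → γ)
    (hs : ∀ x, s (s x) = x) (g : γ → ℝ) (hg : ∀ x, g (s x) = g x)
    (T T' : Finset γ) (hT : ∀ x, x ∈ T ↔ s x ∉ T) (hT' : ∀ x, x ∈ T' ↔ s x ∉ T') :
    ∏ x ∈ T, g x = ∏ x ∈ T', g x := by
  refine Finset.prod_bij' (fun x _ => if x ∈ T' then x else s x)
    (fun x _ => if x ∈ T then x else s x) ?_ ?_ ?_ ?_ ?_
  · intro a ha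
    by_cases h : a ∈ T'
    · simpa [h]
    · simp only [h, if_false]
      have := (hT' a).not.mp h
      simpa using this
  · intro a ha
    by_cases h : a ∈ T
    · simpa [h]
    · simp only [h, if_false]
      have := (hT a).not.mp h
      simpa using this
  · intro a ha
    by_cases h : a ∈ T'
    · simp [h, ha]
    · simp only [h, if_false]
      have hsa : s a ∉ T := (hT a).mp ha
      simp [hsa, hs]
  · intro a ha
    by_cases h : a ∈ T
    · simp [h, ha]
    · simp only [h, if_false]
      have hsa : s a ∉ T' := (hT' a).mp ha
      simp [hsa, hs]
  · intro a ha
    by_cases h : a ∈ T'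
    · simp [h]
    · simp [h, hg]

end Pre

section OrbitStructure

set_option linter.unusedSectionVars false

variable {α : Type*} [Fintype α] [DecidableEq α] (P S : Equiv.Perm α)
  (hP2 : ∀ x, P (P x) = x) (hS2 : ∀ x, S (S x) = x) (x₀ : α)

local notation "c" => P * S
local notation "m" => Function.minimalPeriod ((P * S) • ·) x₀

lemma m_pos : 0 < (m : ℕ) := by
  apply Function.IsPeriodicPt.minimalPeriod_pos (orderOf_pos (P * S))
  show ((P*S) • ·)^[orderOf (P*S)] x₀ = x₀
  rw [smul_iterate, pow_orderOf_eq_one]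
  simp

lemma zpow_fix (t : ℤ) : (c ^ t) • x₀ = x₀ ↔ (m : ℤ) ∣ t :=
  MulAction.zpow_smul_eq_iff_minimalPeriod_dvd

lemma zpow_cong {a b : ℤ} (h : a ≡ b [ZMOD (m:ℕ)]) : (c ^ a) • x₀ = (c ^ b) • x₀ := by
  have h2 : (c ^ (a - b)) • x₀ = x₀ := (zpow_fix P S x₀ _).mpr (Int.ModEq.dvd h.symm)
  calc (c ^ a) • x₀ = (c ^ (b + (a - b))) • x₀ := by ring_nf
    _ = (c ^ b) • ((c ^ (a-b)) • x₀) := by rw [zpow_add, mul_smul]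
    _ = (c ^ b) • x₀ := by rw [h2]

lemma zpow_cong_iff {a b : ℤ} : (c ^ a) • x₀ = (c ^ b) • x₀ ↔ a ≡ b [ZMOD (m:ℕ)] := by
  constructor
  · intro h
    have : (c ^ (a - b)) • x₀ = x₀ := by
      have h1 := congrArg (fun y => (c ^ (-b)) • y) h
      simp only [smul_smul, ← zpow_add] at h1
      rw [show -b + a = a - b by ring, show -b + b = 0 by ring] at h1
      simpa using h1
    have hd := (zpow_fix P S x₀ _).mp this
    exact Int.ModEq.symm (Int.modEq_iff_dvd.mpr (by simpa using hd))
  · exact zpow_cong P S x₀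

include hP2 in
lemma Pinv : P⁻¹ = P := by
  ext x
  exact (Equiv.Perm.eq_inv_iff_eq.mpr (hP2 x)).symm

include hP2 in
lemma PPone : P * P = 1 := by
  ext x
  simp [Equiv.Perm.mul_apply, hP2]

include hP2 hS2 in
lemma conj_c (k : ℤ) : P * (c ^ k) * P = c ^ (-k) := by
  have hcinv : (P * S)⁻¹ = S * P := by rw [mul_inv_rev, Pinv P hP2, Pinv S hS2]
  have hconj : P * c * P⁻¹ = c⁻¹ := by
    rw [Pinv P hP2, hcinv]
    ext y
    simp [Equiv.Perm.mul_apply, hP2]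
  calc P * c ^ k * P = P * c ^ k * P⁻¹ := by rw [Pinv P hP2]
    _ = (MulAut.conj P) (c ^ k) := rfl
    _ = ((MulAut.conj P) c) ^ k := map_zpow _ _ _
    _ = (c⁻¹) ^ k := by rw [MulAut.conj_apply, hconj]
    _ = c ^ (-k) := by rw [inv_zpow, zpow_neg]

include hP2 hS2 in
lemma P_mul_zpow (k : ℤ) : P * (c ^ k) = c ^ (-k) * P := by
  have h := conj_c P S hP2 hS2 k
  calc P * c ^ k = P * c ^ k * 1 := (mul_one _).symm
    _ = P * c ^ k * (P * P) := by rw [PPone P hP2]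
    _ = (P * c ^ k * P) * P := by rw [← mul_assoc]
    _ = c ^ (-k) * P := by rw [h]

include hP2 hS2 in
lemma P_zpow_apply (k : ℤ) (y : α) : P ((c ^ k) y) = (c ^ (-k)) (P y) := by
  calc P ((c ^ k) y) = (P * (c ^ k)) y := rfl
    _ = (c ^ (-k) * P) y := by rw [P_mul_zpow P S hP2 hS2]
    _ = (c ^ (-k)) (P y) := rfl

include hP2 hS2 in
lemma S_zpow_apply (k : ℤ) (y : α) : S ((c ^ k) y) = (c ^ (-(k+1))) (P y) := by
  have h1 : ∀ z, S z = P ((P * S) z) := by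
    intro z; simp [Equiv.Perm.mul_apply, hP2]
  rw [h1]
  have h2 : (P * S) ((c ^ k) y) = (c ^ (k+1)) y := by
    calc (P * S) ((c ^ k) y) = ((P*S) * (c ^ k)) y := rfl
      _ = (c ^ (k+1)) y := by rw [← zpow_one_add]; ring_nf
  rw [h2, P_zpow_apply P S hP2 hS2]

variable (hPf : ∀ x, P x ≠ x) (hSf : ∀ x, S x ≠ x)

include hP2 hS2 hPf hSf in
lemma crux : ∀ k : ℤ, P x₀ ≠ (c ^ k) x₀ := by
  intro k h
  have Pp : ∀ j : ℤ, P ((c ^ j) x₀) = (c ^ (k - j)) x₀ := by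
    intro j
    rw [P_zpow_apply P S hP2 hS2, h]
    calc (c ^ (-j)) ((c ^ k) x₀) = ((c ^ (-j)) * (c ^ k)) x₀ := rfl
      _ = (c ^ (k - j)) x₀ := by rw [← zpow_add]; ring_nf
  have Sp : ∀ j : ℤ, S ((c ^ j) x₀) = (c ^ (k - 1 - j)) x₀ := by
    intro j
    rw [S_zpow_apply P S hP2 hS2, h]
    calc (c ^ (-(j+1))) ((c ^ k) x₀) = ((c ^ (-(j+1))) * (c ^ k)) x₀ := rfl
      _ = (c ^ (k - 1 - j)) x₀ := by rw [← zpow_add]; ring_nf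
  have key : ∀ a b : ℤ, a ≡ b [ZMOD (m:ℕ)] → (c ^ a) x₀ = (c ^ b) x₀ := by
    intro a b hab
    exact zpow_cong P S x₀ hab
  have notdvd1 : ∀ j : ℤ, ¬ ((m : ℤ) ∣ (k - 2*j)) := by
    intro j hdvd
    apply hPf ((c ^ j) x₀)
    rw [Pp j]
    apply key
    exact Int.ModEq.symm (Int.modEq_iff_dvd.mpr (by rw [show k - j - j = k - 2*j by ring]; exact hdvd))
  have notdvd2 : ∀ j : ℤ, ¬ ((m : ℤ) ∣ (k - 1 - 2*j)) := by
    intro j hdvd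
    apply hSf ((c ^ j) x₀)
    rw [Sp j]
    apply key
    exact Int.ModEq.symm (Int.modEq_iff_dvd.mpr (by rw [show k - 1 - j - j = k - 1 - 2*j by ring]; exact hdvd))
  rcases Nat.even_or_odd m with ⟨t, ht⟩ | ⟨t, ht⟩
  · rcases Int.even_or_odd k with ⟨u, hu⟩ | ⟨u, hu⟩
    · exact notdvd1 u ⟨0, by omega⟩
    · exact notdvd2 u ⟨0, by omega⟩
  · exact notdvd1 (k * ((t:ℤ) + 1)) ⟨-k, by push_cast [ht]; ring⟩

include hP2 hS2 in
lemma orbit_sub_D :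
    MulAction.orbit (Subgroup.closure ({P, S} : Set (Equiv.Perm α))) x₀ ⊆
      {y | ∃ k : ℤ, (c ^ k) x₀ = y ∨ (c ^ k) (P x₀) = y} := by
  set D : Set α := {y | ∃ k : ℤ, (c ^ k) x₀ = y ∨ (c ^ k) (P x₀) = y} with hD
  have hstep : ∀ g ∈ Subgroup.closure ({P, S} : Set (Equiv.Perm α)),
      (∀ z ∈ D, g z ∈ D) ∧ (∀ z ∈ D, g⁻¹ z ∈ D) := by
    intro g hg
    induction hg using Subgroup.closure_induction with
    | mem x hx =>
      have hQ : ∀ (Q : Equiv.Perm α), (∀ z ∈ D, Q z ∈ D) → (∀ x, Q (Q x) = x) →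
          (∀ z ∈ D, Q⁻¹ z ∈ D) := by
        intro Q h1 h2 z hz
        have : Q⁻¹ z = Q z := by
          rw [Pinv Q h2]
        rw [this]; exact h1 z hz
      rw [Set.mem_insert_iff, Set.mem_singleton_iff] at hx
      rcases hx with h | h
      · rw [h]
        refine ⟨?_, ?_⟩
        · rintro z ⟨k, rfl | rfl⟩
          · exact ⟨-k, Or.inr (by rw [P_zpow_apply P S hP2 hS2])⟩
          · refine ⟨-k, Or.inl ?_⟩
            rw [P_zpow_apply P S hP2 hS2, hP2]
        · apply hQ _ ?_ hP2
          rintro z ⟨k, rfl | rfl⟩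
          · exact ⟨-k, Or.inr (by rw [P_zpow_apply P S hP2 hS2])⟩
          · refine ⟨-k, Or.inl ?_⟩
            rw [P_zpow_apply P S hP2 hS2, hP2]
      · rw [h]
        refine ⟨?_, ?_⟩
        · rintro z ⟨k, rfl | rfl⟩
          · exact ⟨-(k+1), Or.inr (by rw [S_zpow_apply P S hP2 hS2])⟩
          · refine ⟨-(k+1), Or.inl ?_⟩
            rw [S_zpow_apply P S hP2 hS2, hP2]
        · apply hQ _ ?_ hS2
          rintro z ⟨k, rfl | rfl⟩
          · exact ⟨-(k+1), Or.inr (by rw [S_zpow_apply P S hP2 hS2])⟩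
          · refine ⟨-(k+1), Or.inl ?_⟩
            rw [S_zpow_apply P S hP2 hS2, hP2]
    | one => simp
    | mul g h hg hh ihg ihh =>
      refine ⟨fun z hz => ?_, fun z hz => ?_⟩
      · have : (g * h) z = g (h z) := rfl
        rw [this]; exact ihg.1 _ (ihh.1 z hz)
      · have : (g * h)⁻¹ z = h⁻¹ (g⁻¹ z) := by
          rw [mul_inv_rev]; rfl
        rw [this]; exact ihh.2 _ (ihg.2 z hz)
    | inv g hg ihg =>
      refine ⟨ihg.2, fun z hz => by simpa using ihg.1 z hz⟩
  rintro y ⟨⟨g, hg⟩, rfl⟩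
  have hx0 : x₀ ∈ D := ⟨0, Or.inl (by simp)⟩
  exact (hstep g hg).1 x₀ hx0

include hP2 hS2 in
lemma zpow_comp (u v : ℤ) (y : α) : (c ^ u) ((c ^ v) y) = (c ^ (u + v)) y := by
  rw [← Equiv.Perm.mul_apply, ← zpow_add]

include hP2 hS2 hPf hSf in
lemma loopSum {d : ℕ} (A : Matrix (Fin d) (Fin d) ℝ) (hA : ∀ a b, A a b = A b a)
    (ε : α → Prop) [DecidablePred ε] (hε : ∀ y, ε (S y) ↔ ¬ ε y)
    (O : Set α) [Fintype ↥O]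
    (hO : O = MulAction.orbit (Subgroup.closure ({P, S} : Set (Equiv.Perm α))) x₀)
    (hOP : ∀ y, y ∈ O → P y ∈ O) (hOS : ∀ y, y ∈ O → S y ∈ O) :
    ∑ j : ↥O → Fin d, ((if (∀ x : ↥O, j ⟨P ↑x, hOP _ x.2⟩ = j x) then (1:ℝ) else 0) *
      ∏ x : ↥O, (if ε ↑x then A (j x) (j ⟨S ↑x, hOS _ x.2⟩) else 1))
    = (A ^ (Nat.card O / 2)).trace := by
  classical
  set G := Subgroup.closure ({P, S} : Set (Equiv.Perm α)) with hG
  set M := Function.minimalPeriod ((P * S) • ·) x₀ with hMdef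
  have hM : 0 < M := m_pos P S x₀
  have hPm : P ∈ G := Subgroup.subset_closure (Set.mem_insert _ _)
  have hSm : S ∈ G := Subgroup.subset_closure (Set.mem_insert_iff.mpr (Or.inr rfl))
  have hcm : ∀ k : ℤ, (c ^ k) ∈ G := fun k => Subgroup.zpow_mem G (mul_mem hPm hSm) k
  have mem1 : ∀ k : ℤ, (c ^ k) x₀ ∈ O := fun k => hO ▸ ⟨⟨c ^ k, hcm k⟩, rfl⟩
  have mem2 : ∀ k : ℤ, (c ^ k) (P x₀) ∈ O := fun k => hO ▸ ⟨⟨c ^ k * P, mul_mem (hcm k) hPm⟩, rfl⟩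
  -- the enumeration of the loop
  set Φ : Fin M ⊕ Fin M → ↥O := fun y =>
    Sum.elim (fun k : Fin M => (⟨(c ^ ((k : ℕ) : ℤ)) x₀, mem1 _⟩ : ↥O))
      (fun k : Fin M => (⟨(c ^ (-((k : ℕ) : ℤ))) (P x₀), mem2 _⟩ : ↥O)) y with hΦ
  -- congruence facts
  have hcong : ∀ a b : ℤ, a ≡ b [ZMOD M] → (c ^ a) x₀ = (c ^ b) x₀ := fun a b h =>
    zpow_cong P S x₀ h
  have hcong' : ∀ a b : ℤ, (c ^ a) x₀ = (c ^ b) x₀ → a ≡ b [ZMOD M] := fun a b h =>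
    (zpow_cong_iff P S x₀).mp h
  have hcrux : ∀ k : ℤ, P x₀ ≠ (c ^ k) x₀ := crux P S hP2 hS2 x₀ hPf hSf
  have hcongP : ∀ a b : ℤ, a ≡ b [ZMOD M] → (c ^ a) (P x₀) = (c ^ b) (P x₀) := by
    intro a b hab
    have h1 : P ((c ^ (-a)) x₀) = (c ^ a) (P x₀) := by
      rw [P_zpow_apply P S hP2 hS2]; ring_nf
    have h2 : P ((c ^ (-b)) x₀) = (c ^ b) (P x₀) := by
      rw [P_zpow_apply P S hP2 hS2]; ring_nf
    rw [← h1, ← h2]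
    exact congrArg (⇑P) (zpow_cong P S x₀ hab.neg)
  have hinjval : ∀ a b : Fin M, ((a:ℕ):ℤ) ≡ ((b:ℕ):ℤ) [ZMOD M] → a = b := by
    intro a b h
    have ha := a.isLt; have hb := b.isLt
    have h1 : ((a:ℕ):ℤ) % (M:ℤ) = ((b:ℕ):ℤ) % (M:ℤ) := h
    rw [Int.emod_eq_of_lt (by positivity) (by exact_mod_cast ha),
      Int.emod_eq_of_lt (by positivity) (by exact_mod_cast hb)] at h1
    ext
    exact_mod_cast h1
  have hbij : Function.Bijective Φ := by
    constructor
    · rintro (a | a) (b | b) h <;> rw [Subtype.ext_iff] at h <;> simp only [hΦ, Sum.elim_inl, Sum.elim_inr] at h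
      · exact congrArg Sum.inl (hinjval a b (hcong' _ _ h))
      · -- c^a x₀ = c^(-b) (P x₀)
        exfalso
        have := congrArg (⇑(c ^ ((b:ℕ):ℤ))) h
        rw [zpow_comp P S hP2 hS2, zpow_comp P S hP2 hS2] at this
        rw [show ((b:ℕ):ℤ) + -((b:ℕ):ℤ) = 0 by ring] at this
        simp only [zpow_zero] at this
        exact hcrux _ (by simpa using this.symm)
      · exfalso
        have := congrArg (⇑(c ^ ((a:ℕ):ℤ))) h.symm
        rw [zpow_comp P S hP2 hS2, zpow_comp P S hP2 hS2] at this
        rw [show ((a:ℕ):ℤ) + -((a:ℕ):ℤ) = 0 by ring] at this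
        simp only [zpow_zero] at this
        exact hcrux _ (by simpa using this.symm)
      · -- c^(-a) (P x₀) = c^(-b) (P x₀)
        refine congrArg Sum.inr ?_
        have h2 := congrArg (⇑P) (congrArg (⇑(c ^ ((a:ℕ):ℤ))) h)
        rw [zpow_comp P S hP2 hS2, zpow_comp P S hP2 hS2] at h2
        rw [P_zpow_apply P S hP2 hS2, P_zpow_apply P S hP2 hS2, hP2] at h2
        have h3 := hcong' _ _ h2
        have h4 : (0:ℤ) ≡ ((b:ℕ):ℤ) - ((a:ℕ):ℤ) [ZMOD M] := by
          convert h3 using 1 <;> ring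
        exact hinjval a b (Int.modEq_iff_dvd.mpr (by simpa using Int.modEq_iff_dvd.mp h4))
    · rintro ⟨y, hy⟩
      have hyD := orbit_sub_D P S hP2 hS2 x₀ (hO ▸ hy)
      obtain ⟨k, hk | hk⟩ := hyD
      · refine ⟨Sum.inl ⟨(k % (M:ℤ)).toNat, ?_⟩, ?_⟩
        · have := Int.emod_lt_of_pos k (b := (M:ℤ)) (by positivity)
          have h0 := Int.emod_nonneg k (by positivity : ((M:ℤ)) ≠ 0)
          omega
        · apply Subtype.ext
          simp only [hΦ, Sum.elim_inl]
          rw [← hk]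
          apply hcong
          have h0 := Int.emod_nonneg k (by positivity : ((M:ℤ)) ≠ 0)
          have : (((k % (M:ℤ)).toNat : ℕ) : ℤ) = k % (M:ℤ) := Int.toNat_of_nonneg h0
          rw [this]
          exact Int.emod_emod_of_dvd k dvd_rfl
      · refine ⟨Sum.inr ⟨((-k) % (M:ℤ)).toNat, ?_⟩, ?_⟩
        · have := Int.emod_lt_of_pos (-k) (b := (M:ℤ)) (by positivity)
          have h0 := Int.emod_nonneg (-k) (by positivity : ((M:ℤ)) ≠ 0)
          omega
        · apply Subtype.ext
          simp only [hΦ, Sum.elim_inr]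
          rw [← hk]
          have h0 := Int.emod_nonneg (-k) (by positivity : ((M:ℤ)) ≠ 0)
          have hcast : (((((-k) % (M:ℤ)).toNat) : ℕ) : ℤ) = (-k) % (M:ℤ) := Int.toNat_of_nonneg h0
          have : -((((-k) % (M:ℤ)).toNat : ℕ) : ℤ) ≡ k [ZMOD M] := by
            rw [hcast]
            have h5 : (-k) % (M:ℤ) ≡ -k [ZMOD M] := Int.emod_emod_of_dvd (-k) dvd_rfl
            simpa using h5.neg
          exact hcongP _ _ this
  -- the equivalence and cardinality
  set Φeq : (Fin M ⊕ Fin M) ≃ ↥O := Equiv.ofBijective Φ hbij with hΦeq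
  have hcard : Nat.card O / 2 = M := by
    have : Nat.card ↥O = 2 * M := by
      rw [Nat.card_congr Φeq.symm]
      simp [Nat.card_eq_fintype_card, two_mul]
    rw [this]
    omega
  rw [hcard]
  set PO : ↥O → ↥O := fun x => ⟨P ↑x, hOP _ x.2⟩ with hPO
  set SO : ↥O → ↥O := fun x => ⟨S ↑x, hOS _ x.2⟩ with hSO
  set rot : Fin M → Fin M := fun k => ⟨((k:ℕ)+1) % M, Nat.mod_lt _ hM⟩ with hrot
  have natmod : ∀ a : ℕ, (((a % M : ℕ)) : ℤ) ≡ (a:ℤ) [ZMOD M] := by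
    intro a
    push_cast
    exact Int.emod_emod_of_dvd _ dvd_rfl
  have fact1 : ∀ k, PO (Φ (Sum.inl k)) = Φ (Sum.inr k) := by
    intro k; apply Subtype.ext
    show P ((c ^ ((k:ℕ):ℤ)) x₀) = (c ^ (-((k:ℕ):ℤ))) (P x₀)
    rw [P_zpow_apply P S hP2 hS2]
  have fact2 : ∀ k, PO (Φ (Sum.inr k)) = Φ (Sum.inl k) := by
    intro k; apply Subtype.ext
    show P ((c ^ (-((k:ℕ):ℤ))) (P x₀)) = (c ^ ((k:ℕ):ℤ)) x₀
    rw [P_zpow_apply P S hP2 hS2, hP2, neg_neg]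
  have fact3 : ∀ k, SO (Φ (Sum.inl k)) = Φ (Sum.inr (rot k)) := by
    intro k; apply Subtype.ext
    show S ((c ^ ((k:ℕ):ℤ)) x₀) = (c ^ (-(((((k:ℕ)+1) % M : ℕ)):ℤ))) (P x₀)
    rw [S_zpow_apply P S hP2 hS2]
    apply hcongP
    have := natmod ((k:ℕ)+1)
    push_cast at this ⊢
    exact this.symm.neg
  have fact4 : ∀ k, SO (Φ (Sum.inr k)) = Φ (Sum.inl ⟨((k:ℕ)+M-1) % M, Nat.mod_lt _ hM⟩) := by
    intro k; apply Subtype.ext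
    show S ((c ^ (-((k:ℕ):ℤ))) (P x₀)) = (c ^ (((((k:ℕ)+M-1) % M : ℕ)):ℤ)) x₀
    rw [S_zpow_apply P S hP2 hS2, hP2]
    have h1 : (-(-((k:ℕ):ℤ)+1)) = ((k:ℕ):ℤ) - 1 := by ring
    rw [h1]
    apply hcong
    have := natmod ((k:ℕ)+M-1)
    have hM1 : ((M:ℤ)) ∣ (((k:ℕ)+M-1 : ℕ) : ℤ) - (((k:ℕ):ℤ) - 1) := by
      push_cast [Nat.cast_sub (by omega : 1 ≤ (k:ℕ)+M)]
      exact ⟨1, by ring⟩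
    calc ((k:ℕ):ℤ) - 1 ≡ (((k:ℕ)+M-1 : ℕ) : ℤ) [ZMOD M] := (Int.modEq_iff_dvd.mpr hM1)
      _ ≡ (((((k:ℕ)+M-1) % M : ℕ)):ℤ) [ZMOD M] := (natmod _).symm
  -- transversals
  set E : Finset ↥O := Finset.image (fun k => Φ (Sum.inl k)) Finset.univ with hE
  have hmemE : ∀ k, Φ (Sum.inl k) ∈ E := fun k => Finset.mem_image_of_mem _ (Finset.mem_univ k)
  have hnotE : ∀ k, Φ (Sum.inr k) ∉ E := by
    intro k hk
    obtain ⟨k', _, hk'⟩ := Finset.mem_image.mp hk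
    exact Sum.inl_ne_inr (hbij.1 hk')
  have hT' : ∀ x, x ∈ E ↔ SO x ∉ E := by
    intro x
    obtain ⟨y, rfl⟩ := hbij.2 x
    cases y with
    | inl k => simp only [hmemE, true_iff, fact3]; exact hnotE _
    | inr k =>
      constructor
      · intro h; exact absurd h (hnotE k)
      · intro h
        exfalso
        apply h
        rw [fact4 k]
        exact hmemE _
  have hT : ∀ x : ↥O, x ∈ Finset.univ.filter (fun x : ↥O => ε ↑x) ↔
      SO x ∉ Finset.univ.filter (fun x : ↥O => ε ↑x) := by
    intro x
    simp only [Finset.mem_filter, Finset.mem_univ, true_and]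
    have := hε (↑x)
    tauto
  have hSOinv : ∀ x, SO (SO x) = x := by
    intro x; apply Subtype.ext; exact hS2 _
  -- the parametrization of constrained functions
  set EE : ((Fin M → Fin d) × (Fin M → Fin d)) ≃ (↥O → Fin d) :=
    (Equiv.sumArrowEquivProdArrow (Fin M) (Fin M) (Fin d)).symm.trans
      (Equiv.arrowCongr Φeq (Equiv.refl (Fin d))) with hEEdef
  have hEE : ∀ (u w : Fin M → Fin d) (y : Fin M ⊕ Fin M), EE (u, w) (Φ y) = Sum.elim u w y := by
    intro u w y
    show (Sum.elim u w) (Φeq.symm (Φeq y)) = Sum.elim u w y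
    rw [Equiv.symm_apply_apply]
  have hind : ∀ u w : Fin M → Fin d,
      (∀ x : ↥O, (EE (u,w)) (PO x) = (EE (u,w)) x) ↔ w = u := by
    intro u w
    constructor
    · intro h
      funext k
      have := h (Φ (Sum.inl k))
      rw [fact1 k, hEE, hEE] at this
      exact this
    · rintro rfl
      intro x
      obtain ⟨y, rfl⟩ := hbij.2 x
      cases y with
      | inl k => rw [fact1 k, hEE, hEE]; rfl
      | inr k => rw [fact2 k, hEE, hEE]; rfl
  have hmain : ∀ u : Fin M → Fin d,
      (∑ w : Fin M → Fin d, ((if (∀ x : ↥O, (EE (u,w)) (PO x) = (EE (u,w)) x) then (1:ℝ) else 0) *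
        ∏ x : ↥O, (if ε ↑x then A ((EE (u,w)) x) ((EE (u,w)) (SO x)) else 1)))
      = ∏ k : Fin M, A (u k) (u (rot k)) := by
    intro u
    have step1 : ∀ w : Fin M → Fin d,
        ((if (∀ x : ↥O, (EE (u,w)) (PO x) = (EE (u,w)) x) then (1:ℝ) else 0) *
          ∏ x : ↥O, (if ε ↑x then A ((EE (u,w)) x) ((EE (u,w)) (SO x)) else 1))
        = (if w = u then ∏ x : ↥O, (if ε ↑x then A ((EE (u,w)) x) ((EE (u,w)) (SO x)) else 1) else 0) := by
      intro w
      by_cases h : w = u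
      · rw [if_pos ((hind u w).mpr h), if_pos h, one_mul]
      · rw [if_neg (fun hc => h ((hind u w).mp hc)), if_neg h, zero_mul]
    rw [Finset.sum_congr rfl (fun w _ => step1 w), Finset.sum_ite_eq' Finset.univ u]
    rw [if_pos (Finset.mem_univ u)]
    -- now evaluate the product for w = u
    set j : ↥O → Fin d := EE (u, u) with hj
    have hju : ∀ k, j (Φ (Sum.inl k)) = u k := fun k => hEE u u (Sum.inl k)
    have hjw : ∀ k, j (Φ (Sum.inr k)) = u k := fun k => hEE u u (Sum.inr k)
    rw [← Finset.prod_filter (fun x : ↥O => ε ↑x) (fun x => A (j x) (j (SO x)))]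
    rw [prod_transversal SO hSOinv (fun x => A (j x) (j (SO x))) ?_ _ E hT hT']
    · rw [Finset.prod_image (by intro a _ b _ h; exact Sum.inl.inj (hbij.1 h))]
      refine Finset.prod_congr rfl fun k _ => ?_
      rw [hju, fact3, hjw]
    · intro x
      show A (j (SO x)) (j (SO (SO x))) = A (j x) (j (SO x))
      rw [hSOinv x]
      exact hA _ _
  calc ∑ j : ↥O → Fin d, ((if (∀ x : ↥O, j ⟨P ↑x, hOP _ x.2⟩ = j x) then (1:ℝ) else 0) *
        ∏ x : ↥O, (if ε ↑x then A (j x) (j ⟨S ↑x, hOS _ x.2⟩) else 1))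
      = ∑ p : (Fin M → Fin d) × (Fin M → Fin d),
          ((if (∀ x : ↥O, (EE p) (PO x) = (EE p) x) then (1:ℝ) else 0) *
          ∏ x : ↥O, (if ε ↑x then A ((EE p) x) ((EE p) (SO x)) else 1)) := by
        rw [Equiv.sum_comp EE (fun j : ↥O → Fin d =>
          ((if (∀ x : ↥O, j (PO x) = j x) then (1:ℝ) else 0) *
            ∏ x : ↥O, (if ε ↑x then A (j x) (j (SO x)) else 1)))]
    _ = ∑ u : Fin M → Fin d, ∑ w : Fin M → Fin d,
          ((if (∀ x : ↥O, (EE (u,w)) (PO x) = (EE (u,w)) x) then (1:ℝ) else 0) *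
          ∏ x : ↥O, (if ε ↑x then A ((EE (u,w)) x) ((EE (u,w)) (SO x)) else 1)) := by
        rw [Fintype.sum_prod_type]
    _ = ∑ u : Fin M → Fin d, ∏ k : Fin M, A (u k) (u (rot k)) :=
        Finset.sum_congr rfl fun u _ => hmain u
    _ = (A ^ M).trace := cycleSum M (by omega)

end OrbitStructure

namespace ZonalPP

variable {n : ℕ}

lemma firstPP_val (x : Fin (2*n)) :
    ((firstPP n x : Fin (2*n)) : ℕ) = 2 * ((x : ℕ) / 2) + (1 - (x : ℕ) % 2) := rfl

lemma firstPP_invol : ∀ x, firstPP n (firstPP n x) = x := fun x => by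
  apply Fin.ext
  rw [firstPP_val, firstPP_val]
  have := x.isLt
  omega

lemma firstPP_fpf : ∀ x, firstPP n x ≠ x := by
  intro x h
  have h2 : ((firstPP n x : Fin (2*n)) : ℕ) = (x:ℕ) := congrArg Fin.val h
  rw [firstPP_val] at h2
  have hx := x.isLt
  omega

lemma firstPP_parity (x : Fin (2*n)) : Even ((firstPP n x : Fin (2*n)) : ℕ) ↔ ¬ Even ((x:ℕ)) := by
  rw [firstPP_val, Nat.even_iff, Nat.even_iff]
  have := x.isLt
  omega

section Glob

variable {N : ℕ} (P S : Equiv.Perm (Fin N))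

lemma mem_loop_smul {q : Loops P S} {x : Fin N}
    (g : Equiv.Perm (Fin N)) (hg : g ∈ Subgroup.closure ({P, S} : Set (Equiv.Perm (Fin N))))
    (hx : x ∈ loopSet q) : g x ∈ loopSet q := by
  rw [loopSet, MulAction.orbitRel.Quotient.mem_orbit] at hx ⊢
  rw [← hx]
  apply Quotient.sound'
  exact ⟨⟨g, hg⟩, rfl⟩

lemma mem_loopP {q : Loops P S} {x : Fin N} (hx : x ∈ loopSet q) : P x ∈ loopSet q :=
  mem_loop_smul P S P (Subgroup.subset_closure (Set.mem_insert _ _)) hx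

lemma mem_loopS {q : Loops P S} {x : Fin N} (hx : x ∈ loopSet q) : S x ∈ loopSet q :=
  mem_loop_smul P S S (Subgroup.subset_closure (Set.mem_insert_iff.mpr (Or.inr rfl))) hx

/-- decomposition of `Fin N` into loops -/
def sigmaLoops : (Σ q : Loops P S, ↥(loopSet q)) ≃ Fin N where
  toFun p := ↑p.2
  invFun x := ⟨Quotient.mk'' x, ⟨x, MulAction.orbitRel.Quotient.mem_orbit.mpr rfl⟩⟩
  left_inv := by
    rintro ⟨q, ⟨x, hx⟩⟩
    obtain rfl : Quotient.mk'' x = q := MulAction.orbitRel.Quotient.mem_orbit.mp hx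
    rfl
  right_inv x := rfl

/-- functions on `Fin N` as dependent tuples of functions on the loops -/
def funLoops (β : Type*) : (Fin N → β) ≃ (∀ q : Loops P S, ↥(loopSet q) → β) where
  toFun i q x := i ↑x
  invFun J x := J (Quotient.mk'' x) ⟨x, MulAction.orbitRel.Quotient.mem_orbit.mpr rfl⟩
  left_inv i := rfl
  right_inv := by
    intro J
    funext q x
    obtain ⟨x, hx⟩ := x
    obtain rfl : Quotient.mk'' x = q := MulAction.orbitRel.Quotient.mem_orbit.mp hx
    rfl

end Glob


end ZonalPP

namespace ZonalPP

open Matrix in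
/-- For `A = X Xᵀ`, the sum over all functions `i : [2n] → [d]` with
`i ∘ P = i` of `∏ₖ A_{i(2k-1), i(2k)}` equals `∏_{O ∈ L(P,S)} Tr(A^{|O|/2})`
(0-indexed, the k-th factor is `A_{i(2k), i(2k+1)}` for `0 ≤ k < n`). -/
theorem statement5 {d n : ℕ} (hd : 1 ≤ d) (hn : 1 ≤ n)
    (X : Matrix (Fin d) (Fin d) ℝ) (P : Equiv.Perm (Fin (2*n))) (hP : IsPairPartition P) :
    ∑ i ∈ Finset.univ.filter (fun i : Fin (2*n) → Fin d => ∀ x, i (P x) = i x),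
        ∏ k : Fin n, (X * Xᵀ) (i ⟨2*(k:ℕ), by have := k.isLt; omega⟩)
          (i ⟨2*(k:ℕ)+1, by have := k.isLt; omega⟩) =
      ((loopType P (firstPP n)).map fun l => ((X * Xᵀ) ^ l).trace).prod := by
  classical
  set A := X * Xᵀ with hAdef
  have hA : ∀ a b, A a b = A b a := by
    intro a b
    simp only [hAdef, Matrix.mul_apply, Matrix.transpose_apply]
    exact Finset.sum_congr rfl fun c _ => mul_comm _ _
  set S : Equiv.Perm (Fin (2*n)) := firstPP n with hSdef
  have hP2 : ∀ x, P (P x) = x := hP.1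
  have hPf : ∀ x, P x ≠ x := hP.2
  have hS2 : ∀ x, S (S x) = x := firstPP_invol
  have hSf : ∀ x, S x ≠ x := firstPP_fpf
  have hε : ∀ y : Fin (2*n), Even ((S y : Fin (2*n)) : ℕ) ↔ ¬ Even ((y:ℕ)) := firstPP_parity
  -- RHS as a product over loops
  have hRHS : ((loopType P S).map fun l => (A ^ l).trace).prod
      = ∏ q : Loops P S, (A ^ (Nat.card (loopSet q) / 2)).trace := by
    rw [loopType, Multiset.map_map]
    rfl
  rw [hRHS]
  -- per-loop factor
  have memP : ∀ (q : Loops P S) (x : ↥(loopSet q)), P ↑x ∈ loopSet q :=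
    fun q x => mem_loopP P S x.2
  have memS : ∀ (q : Loops P S) (x : ↥(loopSet q)), S ↑x ∈ loopSet q :=
    fun q x => mem_loopS P S x.2
  set F : ∀ q : Loops P S, (↥(loopSet q) → Fin d) → ℝ := fun q j =>
    (if (∀ x : ↥(loopSet q), j ⟨P ↑x, memP q x⟩ = j x) then (1:ℝ) else 0) *
      ∏ x : ↥(loopSet q), (if Even ((x:ℕ)) then A (j x) (j ⟨S ↑x, memS q x⟩) else 1) with hF
  have hedge : ∀ i : Fin (2*n) → Fin d,
      (∏ k : Fin n, A (i ⟨2*(k:ℕ), by have := k.isLt; omega⟩)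
        (i ⟨2*(k:ℕ)+1, by have := k.isLt; omega⟩))
      = ∏ x : Fin (2*n), (if Even ((x:ℕ)) then A (i x) (i (S x)) else 1) := by
    intro i
    rw [← Finset.prod_filter]
    refine Finset.prod_bij' (fun (k : Fin n) _ => (⟨2*(k:ℕ), by have := k.isLt; omega⟩ : Fin (2*n)))
      (fun (x : Fin (2*n)) _ => (⟨(x:ℕ)/2, by have := x.isLt; omega⟩ : Fin n)) ?_ ?_ ?_ ?_ ?_
    · intro k _
      simp only [Finset.mem_filter, Finset.mem_univ, true_and]
      exact ⟨(k:ℕ), by omega⟩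
    · intro x _
      exact Finset.mem_univ _
    · intro k _
      apply Fin.ext
      simp only [Fin.val_mk]
      omega
    · intro x hx
      simp only [Finset.mem_filter, Finset.mem_univ, true_and] at hx
      obtain ⟨r, hr⟩ := hx
      apply Fin.ext
      simp only [Fin.val_mk]
      omega
    · intro k _
      have hsval : S (⟨2*(k:ℕ), by have := k.isLt; omega⟩ : Fin (2*n))
          = ⟨2*(k:ℕ)+1, by have := k.isLt; omega⟩ := by
        apply Fin.ext
        rw [firstPP_val]
        simp only [Fin.val_mk]
        omega
      rw [hsval]
  calc ∑ i ∈ Finset.univ.filter (fun i : Fin (2*n) → Fin d => ∀ x, i (P x) = i x),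
        ∏ k : Fin n, A (i ⟨2*(k:ℕ), by have := k.isLt; omega⟩)
          (i ⟨2*(k:ℕ)+1, by have := k.isLt; omega⟩)
      = ∑ i : Fin (2*n) → Fin d, ∏ q : Loops P S, F q (fun x => i ↑x) := by
        rw [Finset.sum_filter]
        refine Finset.sum_congr rfl fun i _ => ?_
        by_cases hc : ∀ x, i (P x) = i x
        · rw [if_pos hc]
          have hcondq : ∀ q : Loops P S, (∀ x : ↥(loopSet q), i (P ↑x) = i ↑x) := by
            intro q x
            exact hc ↑x
          have h2 : ∏ q : Loops P S, F q (fun x => i ↑x)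
              = ∏ q : Loops P S, ∏ x : ↥(loopSet q),
                  (if Even ((x:ℕ)) then A (i ↑x) (i (S ↑x)) else 1) := by
            refine Finset.prod_congr rfl fun q _ => ?_
            rw [hF]
            simp only
            rw [if_pos (hcondq q), one_mul]
          rw [h2, Finset.prod_sigma', Finset.univ_sigma_univ]
          exact (hedge i).trans ((Equiv.prod_comp (sigmaLoops P S)
            (fun x : Fin (2*n) => if Even ((x:ℕ)) then A (i x) (i (S x)) else 1)).symm)
        · rw [if_neg hc]
          have : ∃ q : Loops P S, ¬ (∀ x : ↥(loopSet q), i (P ↑x) = i ↑x) := by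
            push_neg at hc ⊢
            obtain ⟨x, hx⟩ := hc
            exact ⟨Quotient.mk'' x, ⟨x, MulAction.orbitRel.Quotient.mem_orbit.mpr rfl⟩, hx⟩
          obtain ⟨q0, hq0⟩ := this
          symm
          apply Finset.prod_eq_zero (Finset.mem_univ q0)
          rw [hF]
          simp only
          rw [if_neg hq0, zero_mul]
    _ = ∑ J : ∀ q : Loops P S, ↥(loopSet q) → Fin d, ∏ q : Loops P S, F q (J q) :=
        Equiv.sum_comp (funLoops P S (Fin d)) (fun J => ∏ q : Loops P S, F q (J q))
    _ = ∏ q : Loops P S, ∑ j : ↥(loopSet q) → Fin d, F q j := by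
        rw [Finset.prod_univ_sum]
        rw [Fintype.piFinset_univ]
    _ = ∏ q : Loops P S, (A ^ (Nat.card (loopSet q) / 2)).trace := by
        refine Finset.prod_congr rfl fun q _ => ?_
        have hq : Quotient.mk'' (Quotient.out q) = q := Quotient.out_eq' q
        have hO : loopSet q = MulAction.orbit
            (Subgroup.closure ({P, S} : Set (Equiv.Perm (Fin (2*n))))) (Quotient.out q) := by
          conv_lhs => rw [← hq]
          rfl
        exact loopSum P S hP2 hS2 (Quotient.out q) hPf hSf A hA
          (fun x : Fin (2*n) => Even ((x:ℕ))) hε (loopSet q) hO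
          (fun y hy => mem_loopP P S hy) (fun y hy => mem_loopS P S hy)

end ZonalPP
end

section
/- Let S₀, S₁, S₂ be pair-partitions of [2k] and λ a partition. Then N^{(2)}_{S₀,S₁,S₂}(λ) = 2^{|L(S₀,S₁)|} · N^{(1)}_{S₀,S₁,S₂}(λ), where |L(S₀,S₁)| is the number of loops of the couple (S₀,S₁). -/
open scoped BigOperators

namespace ZonalPP

private lemma perm_mul_self {N : ℕ} {s : Equiv.Perm (Fin N)}
    (h : Function.Involutive s) : s * s = 1 := by
  ext x
  simp [Equiv.Perm.mul_apply, h x]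

/-- Existence of a "potential": a 2-coloring flipping under both involutions. -/
lemma exists_delta {N : ℕ} (S0 S1 : Equiv.Perm (Fin N))
    (h0 : IsPairPartition S0) (h1 : IsPairPartition S1) :
    ∃ δ : Fin N → ZMod 2, (∀ x, δ (S0 x) = δ x + 1) ∧ (∀ x, δ (S1 x) = δ x + 1) := by
  classical
  obtain ⟨h0i, h0f⟩ := h0
  obtain ⟨h1i, h1f⟩ := h1
  have hs0 : S0 * S0 = 1 := perm_mul_self h0i
  have hs1 : S1 * S1 = 1 := perm_mul_self h1i
  have h0inv : S0⁻¹ = S0 := inv_eq_of_mul_eq_one_right hs0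
  have h1inv : S1⁻¹ = S1 := inv_eq_of_mul_eq_one_right hs1
  set c : Equiv.Perm (Fin N) := S0 * S1 with hc
  have hsc : SemiconjBy S0 c c⁻¹ := by
    show S0 * c = c⁻¹ * S0
    have e1 : S0 * c = S1 := by rw [hc, ← mul_assoc, hs0, one_mul]
    have e2 : c⁻¹ * S0 = S1 := by
      rw [hc, mul_inv_rev, h0inv, h1inv, mul_assoc, hs0, mul_one]
    rw [e1, e2]
  have hzp : ∀ j : ℤ, S0 * c ^ j = c ^ (-j) * S0 := by
    intro j
    have h := (hsc.zpow_right j).eq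
    simpa [zpow_neg, inv_zpow] using h
  have happ : ∀ (j : ℤ) (x : Fin N), S0 ((c ^ j) x) = (c ^ (-j)) (S0 x) := by
    intro j x
    have h := congrArg (fun σ : Equiv.Perm (Fin N) => σ x) (hzp j)
    simpa [Equiv.Perm.mul_apply] using h
  have hS1c : ∀ x, S0 (c x) = S1 x := by
    intro x
    show S0 (S0 (S1 x)) = S1 x
    exact h0i (S1 x)
  set H := Subgroup.closure ({c} : Set (Equiv.Perm (Fin N))) with hH
  let mk : Fin N → MulAction.orbitRel.Quotient H (Fin N) := Quotient.mk''
  have hmem : ∀ j : ℤ, c ^ j ∈ H := fun j =>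
    Subgroup.zpow_mem _ (Subgroup.subset_closure (Set.mem_singleton c)) j
  have hmk : ∀ (j : ℤ) (x : Fin N), mk ((c ^ j) x) = mk x := by
    intro j x
    apply Quotient.sound'
    rw [MulAction.orbitRel_apply]
    exact ⟨⟨c ^ j, hmem j⟩, rfl⟩
  let ι : MulAction.orbitRel.Quotient H (Fin N) → MulAction.orbitRel.Quotient H (Fin N) :=
    Quotient.map' S0 (by
      intro a b hab
      rw [MulAction.orbitRel_apply] at hab ⊢
      obtain ⟨⟨g, hg⟩, hgb⟩ := hab
      obtain ⟨j, hj⟩ := Subgroup.mem_closure_singleton.mp hg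
      refine ⟨⟨c ^ (-j), hmem _⟩, ?_⟩
      show (c ^ (-j)) (S0 b) = S0 a
      rw [← happ j b]
      have hb : (c ^ j) b = a := by rw [hj]; exact hgb
      rw [hb])
  have hιmk : ∀ x, ι (mk x) = mk (S0 x) := fun x => Quotient.map'_mk'' _ _ x
  have hιι : ∀ q, ι (ι q) = q := by
    refine fun q => Quotient.inductionOn' q fun x => ?_
    show ι (ι (mk x)) = mk x
    rw [hιmk, hιmk, h0i x]
  have hιne : ∀ q, ι q ≠ q := by
    refine fun q => Quotient.inductionOn' q fun x hq => ?_
    have hq' : mk (S0 x) = mk x := by rw [← hιmk]; exact hq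
    have hrel := Quotient.exact' hq'
    rw [MulAction.orbitRel_apply] at hrel
    obtain ⟨⟨g, hg⟩, hgb⟩ := hrel
    obtain ⟨j, hj⟩ := Subgroup.mem_closure_singleton.mp hg
    have hjx : (c ^ j) x = S0 x := by rw [hj]; exact hgb
    have hcomp : ∀ (a b : ℤ) (y : Fin N), (c ^ a) ((c ^ b) y) = (c ^ (a + b)) y := by
      intro a b y
      rw [zpow_add]
      rfl
    rcases Int.even_or_odd j with ⟨i, hi⟩ | ⟨i, hi⟩
    · apply h0f ((c ^ i) x)
      rw [happ i x, ← hjx, hcomp, show -i + j = i by omega]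
    · apply h1f ((c ^ i) x)
      have hci : c ((c ^ i) x) = (c ^ (i + 1)) x := by
        have h' : c ^ (i + 1) = c * c ^ i := by rw [add_comm, zpow_add, zpow_one]
        rw [h']
        rfl
      have hy : S1 ((c ^ i) x) = S0 ((c ^ (i + 1)) x) := by
        rw [← hS1c ((c ^ i) x), hci]
      rw [hy, happ (i + 1) x, ← hjx, hcomp, show -(i + 1) + j = i by omega]
  obtain ⟨emb, hemb⟩ := exists_injective_nat (MulAction.orbitRel.Quotient H (Fin N))
  let χ : MulAction.orbitRel.Quotient H (Fin N) → ZMod 2 :=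
    fun q => if emb q < emb (ι q) then 0 else 1
  have hχ : ∀ q, χ (ι q) = χ q + 1 := by
    intro q
    have hne : emb (ι q) ≠ emb q := fun h => hιne q (hemb h)
    by_cases hlt : emb q < emb (ι q)
    · have e1 : χ q = 0 := if_pos hlt
      have e2 : χ (ι q) = 1 := by
        show (if emb (ι q) < emb (ι (ι q)) then (0 : ZMod 2) else 1) = 1
        rw [hιι q, if_neg (by omega)]
      rw [e1, e2, zero_add]
    · have e1 : χ q = 1 := if_neg hlt
      have e2 : χ (ι q) = 0 := by
        show (if emb (ι q) < emb (ι (ι q)) then (0 : ZMod 2) else 1) = 0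
        rw [hιι q, if_pos (by omega)]
      rw [e1, e2]
      decide
  refine ⟨fun x => χ (mk x), fun x => ?_, fun x => ?_⟩
  · show χ (mk (S0 x)) = χ (mk x) + 1
    rw [← hιmk, hχ]
  · show χ (mk (S1 x)) = χ (mk x) + 1
    have hc1 : c (S1 x) = S0 x := by
      show S0 (S1 (S1 x)) = S0 x
      rw [h1i x]
    have hinv : (c ^ (-1 : ℤ)) (S0 x) = S1 x := by
      rw [zpow_neg_one]
      exact Equiv.Perm.inv_eq_iff_eq.mpr hc1.symm
    have h1' : mk (S1 x) = mk (S0 x) := by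
      rw [← hinv, hmk]
    rw [h1', ← hιmk, hχ]

/-- The number of parity functions flipping under both involutions is `2 ^ numLoops`. -/
lemma card_solutions {N : ℕ} (S0 S1 : Equiv.Perm (Fin N))
    (h0 : IsPairPartition S0) (h1 : IsPairPartition S1) :
    Nat.card {ε : Fin N → ZMod 2 //
      (∀ x, ε (S0 x) = ε x + 1) ∧ (∀ x, ε (S1 x) = ε x + 1)} = 2 ^ numLoops S0 S1 := by
  classical
  obtain ⟨δ, hδ0, hδ1⟩ := exists_delta S0 S1 h0 h1
  have key : ∀ (ε : Fin N → ZMod 2), (∀ x, ε (S0 x) = ε x + 1) → (∀ x, ε (S1 x) = ε x + 1) →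
      ∀ g ∈ Subgroup.closure ({S0, S1} : Set (Equiv.Perm (Fin N))),
      ∀ x, ε (g x) - δ (g x) = ε x - δ x := by
    intro ε hε0 hε1 g hg
    refine Subgroup.closure_induction ?_ ?_ ?_ ?_ hg
    · rintro s (rfl | rfl)
      · intro x; rw [hε0 x, hδ0 x]; ring
      · intro x; rw [hε1 x, hδ1 x]; ring
    · intro x; rfl
    · intro g' h' _ _ ihg ihh x
      have h1 : (g' * h') x = g' (h' x) := rfl
      rw [h1, ihg, ihh]
    · intro g' _ ihg x
      have h1 := ihg (g'⁻¹ x)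
      rw [show g' (g'⁻¹ x) = x from Equiv.apply_symm_apply g' x] at h1
      exact h1.symm
  have hS0mem : S0 ∈ Subgroup.closure ({S0, S1} : Set (Equiv.Perm (Fin N))) :=
    Subgroup.subset_closure (Set.mem_insert _ _)
  have hS1mem : S1 ∈ Subgroup.closure ({S0, S1} : Set (Equiv.Perm (Fin N))) :=
    Subgroup.subset_closure (Set.mem_insert_of_mem _ rfl)
  have hmkS0 : ∀ x : Fin N, (Quotient.mk'' (S0 x) : Loops S0 S1) = Quotient.mk'' x := by
    intro x
    apply Quotient.sound'
    rw [MulAction.orbitRel_apply]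
    exact ⟨⟨S0, hS0mem⟩, rfl⟩
  have hmkS1 : ∀ x : Fin N, (Quotient.mk'' (S1 x) : Loops S0 S1) = Quotient.mk'' x := by
    intro x
    apply Quotient.sound'
    rw [MulAction.orbitRel_apply]
    exact ⟨⟨S1, hS1mem⟩, rfl⟩
  have e : {ε : Fin N → ZMod 2 //
      (∀ x, ε (S0 x) = ε x + 1) ∧ (∀ x, ε (S1 x) = ε x + 1)} ≃ (Loops S0 S1 → ZMod 2) :=
    { toFun := fun ε q => Quotient.liftOn' q (fun x => ε.1 x - δ x) (by
        intro a b hab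
        rw [MulAction.orbitRel_apply] at hab
        obtain ⟨⟨g, hg⟩, hgb⟩ := hab
        have h1 := key ε.1 ε.2.1 ε.2.2 g hg b
        rw [show g b = a from hgb] at h1
        exact h1)
      invFun := fun φ => ⟨fun x => φ (Quotient.mk'' x) + δ x, by
        constructor
        · intro x
          show φ (Quotient.mk'' (S0 x)) + δ (S0 x) = φ (Quotient.mk'' x) + δ x + 1
          rw [hmkS0 x, hδ0 x, add_assoc]
        · intro x
          show φ (Quotient.mk'' (S1 x)) + δ (S1 x) = φ (Quotient.mk'' x) + δ x + 1
          rw [hmkS1 x, hδ1 x, add_assoc]⟩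
      left_inv := by
        intro ε
        apply Subtype.ext
        funext x
        show (ε.1 x - δ x) + δ x = ε.1 x
        rw [sub_add_cancel]
      right_inv := by
        intro φ
        funext q
        refine Quotient.inductionOn' q fun x => ?_
        show (φ (Quotient.mk'' x) + δ x) - δ x = φ (Quotient.mk'' x)
        rw [add_sub_cancel_right] }
  rw [Nat.card_congr e, Nat.card_fun, Nat.card_zmod]
  rfl

private lemma cast_step {a b : ℕ} (h : a / 2 = b / 2) (hne : a ≠ b) :
    (a : ZMod 2) = (b : ZMod 2) + 1 := by
  have h11 : (1 : ZMod 2) + 1 = 0 := by decide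
  rcases (by omega : a = b + 1 ∨ b = a + 1) with h' | h'
  · subst h'; push_cast; ring
  · subst h'
    push_cast
    rw [add_assoc, h11, add_zero]

/-- `N²_{S₀,S₁,S₂}(λ) = 2^{|L(S₀,S₁)|} · N¹_{S₀,S₁,S₂}(λ)`. -/
theorem statement8 {k n : ℕ} (S0 S1 S2 : Equiv.Perm (Fin (2*k)))
    (h0 : IsPairPartition S0) (h1 : IsPairPartition S1) (h2 : IsPairPartition S2)
    (lam : Nat.Partition n) :
    N2 S0 S1 S2 lam = 2 ^ numLoops S0 S1 * N1 S0 S1 S2 lam := by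
  classical
  have hvlt : ∀ x : ZMod 2, x.val < 2 := fun x => ZMod.val_lt x
  have hflip : ∀ x y : ZMod 2, x = y + 1 → y = x + 1 := by decide
  have hvalne : ∀ x y : ZMod 2, x = y + 1 → x.val ≠ y.val := by decide
  have haa : ∀ x : ZMod 2, x + 1 + 1 = x := by decide
  have hvalcast : ∀ x : ZMod 2, ((x.val : ℕ) : ZMod 2) = x := by decide
  have htwo : (2 : ZMod 2) = 0 := by decide
  have e : {f : Fin (2*k) → ℕ × ℕ //
        InBoxes2 lam f ∧ P0cond S0 f ∧ P1cond S0 S1 f ∧ P2cond S2 f}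
      ≃ ({ε : Fin (2*k) → ZMod 2 //
            (∀ x, ε (S0 x) = ε x + 1) ∧ (∀ x, ε (S1 x) = ε x + 1)} ×
         {g : Fin (2*k) → ℕ × ℕ //
            (∀ l, (g l).2 < rowLen lam (g l).1) ∧ (∀ l, g (S0 l) = g l) ∧
            (∀ l, (g (S1 l)).2 = (g l).2) ∧ (∀ l, (g (S2 l)).1 = (g l).1)}) :=
    { toFun := fun f => by
        obtain ⟨f, hbox, hp0, hp1, hp2⟩ := f
        have hεS0 : ∀ l, (((f (S0 l)).2 : ZMod 2)) = ((f l).2 : ZMod 2) + 1 :=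
          fun l => cast_step (hp0 l).2.1 (hp0 l).2.2
        refine ⟨⟨fun l => ((f l).2 : ZMod 2), hεS0, fun l => ?_⟩,
          ⟨fun l => ((f l).1, (f l).2 / 2), fun l => ?_, fun l => ?_, fun l => ?_, fun l => ?_⟩⟩
        · -- ε (S1 l) = ε l + 1
          have h1 := hεS0 (S1 l)
          have h2 : (((f (S0 (S1 l))).2 : ZMod 2)) = ((f l).2 : ZMod 2) := by rw [hp1 l]
          show ((f (S1 l)).2 : ZMod 2) = ((f l).2 : ZMod 2) + 1
          exact hflip _ _ (by
            show ((f l).2 : ZMod 2) = ((f (S1 l)).2 : ZMod 2) + 1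
            rw [← h2, h1])
        · show (f l).2 / 2 < rowLen lam (f l).1
          have := hbox l; omega
        · show ((f (S0 l)).1, (f (S0 l)).2 / 2) = ((f l).1, (f l).2 / 2)
          rw [(hp0 l).1, (hp0 l).2.1]
        · show (f (S1 l)).2 / 2 = (f l).2 / 2
          rw [← (hp0 (S1 l)).2.1, hp1 l]
        · exact hp2 l
      invFun := fun p => by
        obtain ⟨⟨ε, hε0, hε1⟩, ⟨g, hg1, hg2, hg3, hg4⟩⟩ := p
        refine ⟨fun l => ((g l).1, 2 * (g l).2 + (ε l).val), fun l => ?_, fun l => ?_,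
          fun l => ?_, fun l => ?_⟩
        · show 2 * (g l).2 + (ε l).val < 2 * rowLen lam (g l).1
          have := hg1 l
          have := hvlt (ε l)
          omega
        · refine ⟨?_, ?_, ?_⟩
          · show (g (S0 l)).1 = (g l).1
            exact congrArg Prod.fst (hg2 l)
          · show (2 * (g (S0 l)).2 + (ε (S0 l)).val) / 2 = (2 * (g l).2 + (ε l).val) / 2
            have h1 := congrArg Prod.snd (hg2 l)
            have := hvlt (ε (S0 l))
            have := hvlt (ε l)
            omega
          · show 2 * (g (S0 l)).2 + (ε (S0 l)).val ≠ 2 * (g l).2 + (ε l).val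
            have h1 := congrArg Prod.snd (hg2 l)
            have h2 := hvalne _ _ (hε0 l)
            omega
        · show 2 * (g (S0 (S1 l))).2 + (ε (S0 (S1 l))).val = 2 * (g l).2 + (ε l).val
          have h1 : (g (S0 (S1 l))).2 = (g l).2 := by
            rw [congrArg Prod.snd (hg2 (S1 l)), hg3 l]
          have h2 : ε (S0 (S1 l)) = ε l := by
            rw [hε0 (S1 l), hε1 l, haa]
          rw [h1, h2]
        · show (g (S2 l)).1 = (g l).1
          exact hg4 l
      left_inv := by
        intro f
        obtain ⟨f, hbox, hp0, hp1, hp2⟩ := f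
        apply Subtype.ext
        funext l
        show ((f l).1, 2 * ((f l).2 / 2) + (((f l).2 : ℕ) : ZMod 2).val) = f l
        rw [ZMod.val_natCast]
        have : 2 * ((f l).2 / 2) + (f l).2 % 2 = (f l).2 := by omega
        rw [this]
      right_inv := by
        intro p
        obtain ⟨⟨ε, hε0, hε1⟩, ⟨g, hg1, hg2, hg3, hg4⟩⟩ := p
        refine Prod.ext_iff.mpr ⟨Subtype.ext ?_, Subtype.ext ?_⟩
        · funext l
          show ((2 * (g l).2 + (ε l).val : ℕ) : ZMod 2) = ε l
          push_cast
          rw [htwo, zero_mul, zero_add]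
          exact hvalcast (ε l)
        · funext l
          show ((g l).1, (2 * (g l).2 + (ε l).val) / 2) = g l
          have := hvlt (ε l)
          have h1 : (2 * (g l).2 + (ε l).val) / 2 = (g l).2 := by omega
          rw [h1] }
  show Nat.card _ = 2 ^ numLoops S0 S1 * Nat.card _
  rw [Nat.card_congr e, Nat.card_prod, card_solutions S0 S1 h0 h1]

end ZonalPP
end

section
/- Let k ≤ n, let (S₁,S₂) be a couple of pair-partitions of [2k], and define pair-partitions S̃₁, S̃₂ of [2n] by adjoining to S₁ and S₂ the pairs {2k+1,2k+2}, {2k+3,2k+4}, …, {2n−1,2n}. Let λ be a partition of n and let S̃₀ be any pair-partition of [2n]. If the number N̂^{(2)}_{S̃₀,S̃₁,S̃₂}(λ) of injective functions f from {1,…,2n} to the boxes of 2λ satisfying (P0),(P1),(P2) with respect to (S̃₀,S̃₁,S̃₂) is nonzero, then S̃₀ restricted to {2k+1,…,2n} equals {{2k+1,2k+2},…,{2n−1,2n}}, i.e. S̃₀(2l+2) = 2l+1 for all k ≤ l < n. -/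
open scoped BigOperators

namespace ZonalPP

/-- If `S̃₁, S̃₂` are the extensions of `S₁, S₂` to `[2n]` by the pairs
`{2k+1,2k+2}, …, {2n-1,2n}`, `S̃₀` is any pair-partition of `[2n]` and the number of
injective functions satisfying (P0),(P1),(P2) w.r.t. `(S̃₀,S̃₁,S̃₂)` is nonzero, then `S̃₀`
restricted to `{2k+1,…,2n}` consists exactly of these pairs. -/
theorem statement9 {k n : ℕ} (hkn : k ≤ n)
    (S1 S2 : Equiv.Perm (Fin (2*k))) (h1 : IsPairPartition S1) (h2 : IsPairPartition S2)
    (T0 T1 T2 : Equiv.Perm (Fin (2*n))) (hT0 : IsPairPartition T0)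
    (hT1 : ExtendsPP S1 T1) (hT2 : ExtendsPP S2 T2)
    (lam : Nat.Partition n)
    (hne : Nhat2 T0 T1 T2 lam ≠ 0) :
    ∀ y : Fin (2*n), 2*k ≤ (y : ℕ) →
      (T0 y : ℕ) = 2 * ((y : ℕ)/2) + (1 - (y : ℕ) % 2) := by
  -- extract an injective function from nonemptiness
  have hnonempty : Nonempty {f : Fin (2*n) → ℕ × ℕ //
      Function.Injective f ∧ InBoxes2 lam f ∧ P0cond T0 f ∧ P1cond T0 T1 f ∧ P2cond T2 f} := by
    by_contra h
    exact hne (by simp [Nhat2, Nat.card_eq_zero.mpr (Or.inl (not_nonempty_iff.mp h))])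
  obtain ⟨⟨f, hinj, _, hP0, hP1, hP2⟩⟩ := hnonempty
  intro y hy
  have hylt := y.isLt
  -- l := partner of y
  set l : Fin (2*n) := ⟨2 * ((y : ℕ)/2) + (1 - (y : ℕ) % 2), by omega⟩ with hl
  have hlval : (l : ℕ) = 2 * ((y : ℕ)/2) + (1 - (y : ℕ) % 2) := rfl
  have hlk : 2*k ≤ (l : ℕ) := by rw [hlval]; omega
  have hT1l : T1 l = y := by
    apply Fin.ext
    rw [hT1.2 l hlk, hlval]; omega
  have hT2l : T2 l = y := by
    apply Fin.ext
    rw [hT2.2 l hlk, hlval]; omega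
  -- rows: f y and f l in same row
  have hrow : (f y).1 = (f l).1 := by
    have := hP2 l; rwa [hT2l] at this
  -- column: f (T0 y) and f l same column
  have hcol : (f (T0 y)).2 = (f l).2 := by
    have := hP1 l; rwa [hT1l] at this
  -- P0 at y: same row as f y
  have hrow2 : (f (T0 y)).1 = (f y).1 := (hP0 y).1
  have hfeq : f (T0 y) = f l := by
    apply Prod.ext
    · rw [hrow2, hrow]
    · exact hcol
  have : T0 y = l := hinj hfeq
  rw [this, hlval]

end ZonalPP
end

section
/- Let k ≤ n, let (S₀,S₁,S₂) be pair-partitions of [2k], and let S̃₀, S̃₁, S̃₂ be the pair-partitions of [2n] obtained by adjoining to each of S₀, S₁, S₂ the pairs {2k+1,2k+2}, …, {2n−1,2n}. Then for every partition λ of n: N̂^{(2)}_{S̃₀,S̃₁,S̃₂}(λ) = 2^{n−k} · (n−k)! · N̂^{(2)}_{S₀,S₁,S₂}(λ). -/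
open scoped BigOperators

namespace ZonalPP

open Finset

/-! ### Partition combinatorics -/

lemma part_le {n : ℕ} (lam : n.Partition) {p : ℕ} (hp : p ∈ lam.parts) : p ≤ n := by
  have := Multiset.single_le_sum (fun x _ => Nat.zero_le x) p hp
  rw [lam.parts_sum] at this; exact this

lemma card_parts_le {n : ℕ} (lam : n.Partition) : Multiset.card lam.parts ≤ n := by
  have h : ∀ x ∈ lam.parts, 1 ≤ x := fun x hx => lam.parts_pos hx
  have := Multiset.card_nsmul_le_sum h
  simp only [smul_eq_mul, mul_one] at this
  rw [lam.parts_sum] at this; simpa using this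

lemma rowLen_le {n : ℕ} (lam : n.Partition) (r : ℕ) : rowLen lam r ≤ n := by
  unfold rowLen
  rcases Nat.lt_or_ge r (lam.parts.sort (· ≤ ·)).reverse.length with h | h
  · rw [List.getD_eq_getElem _ _ h]
    have hmem := List.getElem_mem h
    rw [List.mem_reverse, Multiset.mem_sort] at hmem
    exact part_le lam hmem
  · rw [List.getD_eq_default _ _ h]; exact Nat.zero_le _

lemma rowLen_pos_lt {n : ℕ} (lam : n.Partition) {r : ℕ} (h : 0 < rowLen lam r) : r < n := by
  unfold rowLen at h
  by_contra hr
  push_neg at hr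
  have hlen : (lam.parts.sort (· ≤ ·)).reverse.length ≤ r := by
    rw [List.length_reverse, Multiset.length_sort]
    exact le_trans (card_parts_le lam) hr
  rw [List.getD_eq_default _ _ hlen] at h
  exact absurd h (lt_irrefl 0)

lemma sum_getD (l : List ℕ) : ∀ m, l.length ≤ m → ∑ r ∈ range m, l.getD r 0 = l.sum := by
  induction l with
  | nil => intro m _; simp [List.getD]
  | cons a t ih =>
    intro m hm
    cases m with
    | zero => simp at hm
    | succ m' =>
      rw [Finset.sum_range_succ']
      simp only [List.getD_cons_succ, List.getD_cons_zero]
      rw [ih m' (by simpa using hm)]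
      simp [List.sum_cons, Nat.add_comm]

lemma sum_rowLen {n : ℕ} (lam : n.Partition) : ∑ r ∈ range n, rowLen lam r = n := by
  unfold rowLen
  rw [sum_getD]
  · rw [List.sum_reverse]
    rw [show ((lam.parts.sort (· ≤ ·)).sum) =
        ((lam.parts.sort (· ≤ ·) : List ℕ) : Multiset ℕ).sum from (Multiset.sum_coe _).symm,
      Multiset.sort_eq]
    exact lam.parts_sum
  · rw [List.length_reverse, Multiset.length_sort]; exact card_parts_le lam

/-- All dominoes of `2λ`, in domino coordinates `(row, halved column)`. -/
def Dall {n : ℕ} (lam : n.Partition) : Finset (ℕ × ℕ) :=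
  (range n ×ˢ range n).filter fun p => p.2 < rowLen lam p.1

lemma mem_Dall {n : ℕ} {lam : n.Partition} {p : ℕ × ℕ} :
    p ∈ Dall lam ↔ p.2 < rowLen lam p.1 := by
  simp only [Dall, mem_filter, mem_product, mem_range]
  constructor
  · tauto
  · intro h
    have h1 := rowLen_le lam p.1
    have h2 := rowLen_pos_lt lam (r := p.1) (by omega)
    exact ⟨⟨h2, by omega⟩, h⟩

lemma card_Dall {n : ℕ} (lam : n.Partition) : (Dall lam).card = n := by
  have heq : Dall lam = (range n).biUnion (fun r => {r} ×ˢ range (rowLen lam r)) := by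
    ext p
    simp only [Dall, mem_filter, mem_product, mem_range, mem_biUnion, mem_singleton]
    constructor
    · rintro ⟨⟨h1, h2⟩, h3⟩
      exact ⟨p.1, h1, rfl, by simpa using h3⟩
    · rintro ⟨r, hr, hp1, hp2⟩
      subst hp1
      exact ⟨⟨hr, lt_of_lt_of_le hp2 (rowLen_le lam p.1)⟩, hp2⟩
  rw [heq, Finset.card_biUnion]
  · simp only [Finset.card_product, Finset.card_singleton, Finset.card_range, one_mul]
    exact sum_rowLen lam
  · intro x _ y _ hxy
    simp only [Finset.disjoint_left]
    rintro p hp hq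
    simp only [mem_product, mem_singleton] at hp hq
    exact hxy (hp.1 ▸ hq.1 ▸ rfl)

/-- Dominoes used by `g`. -/
def usedD {k : ℕ} (g : Fin (2*k) → ℕ × ℕ) : Finset (ℕ × ℕ) :=
  (univ : Finset (Fin (2*k))).image fun l => ((g l).1, (g l).2 / 2)

lemma card_usedD {k : ℕ} (S0 : Equiv.Perm (Fin (2*k))) (h0 : IsPairPartition S0)
    (g : Fin (2*k) → ℕ × ℕ) (hinj : Function.Injective g) (hP0 : P0cond S0 g) :
    (usedD g).card = k := by
  set d : Fin (2*k) → ℕ × ℕ := fun l => ((g l).1, (g l).2 / 2) with hd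
  have key : ∀ x y, d y = d x ↔ (y = x ∨ y = S0 x) := by
    intro x y
    constructor
    · intro h
      rw [hd] at h
      simp only [Prod.mk.injEq] at h
      obtain ⟨h1, h2⟩ := h
      have h3 := hP0 x
      have : (g y).2 = (g x).2 ∨ (g y).2 = (g (S0 x)).2 := by omega
      rcases this with h4 | h4
      · left; exact hinj (Prod.ext h1 h4)
      · right; exact hinj (Prod.ext (h1.trans (h3.1).symm) h4)
    · rintro (rfl | rfl)
      · rfl
      · have h3 := hP0 x
        exact Prod.ext h3.1 h3.2.1
  have hcard := Finset.card_eq_sum_card_fiberwise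
    (fun x (_ : x ∈ (univ : Finset (Fin (2*k)))) => Finset.mem_image_of_mem d (mem_univ x))
  have hfib : ∀ bb ∈ (univ : Finset (Fin (2*k))).image d,
      (Finset.filter (fun a => d a = bb) univ).card = 2 := by
    intro bb hb
    obtain ⟨x, _, rfl⟩ := Finset.mem_image.mp hb
    have : Finset.filter (fun a => d a = d x) univ = {x, S0 x} := by
      ext y
      simp only [mem_filter, mem_univ, true_and, mem_insert, mem_singleton]
      exact key x y
    rw [this, Finset.card_insert_of_notMem (by simp [Ne.symm (h0.2 x)]), Finset.card_singleton]
  rw [Finset.sum_congr rfl hfib, Finset.sum_const, smul_eq_mul, Finset.card_univ,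
    Fintype.card_fin] at hcard
  have heq : usedD g = (univ : Finset (Fin (2*k))).image d := rfl
  rw [heq]
  omega

lemma usedD_subset {k n : ℕ} (lam : n.Partition) (g : Fin (2*k) → ℕ × ℕ)
    (hbox : InBoxes2 lam g) : usedD g ⊆ Dall lam := by
  intro p hp
  obtain ⟨l, _, rfl⟩ := Finset.mem_image.mp hp
  rw [mem_Dall]
  have := hbox l
  simp only
  omega

/-- Free dominoes. -/
def freeD {k n : ℕ} (lam : n.Partition) (g : Fin (2*k) → ℕ × ℕ) : Finset (ℕ × ℕ) :=
  Dall lam \ usedD g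

lemma card_freeD {k n : ℕ} (lam : n.Partition) (S0 : Equiv.Perm (Fin (2*k)))
    (h0 : IsPairPartition S0) (g : Fin (2*k) → ℕ × ℕ) (hinj : Function.Injective g)
    (hbox : InBoxes2 lam g) (hP0 : P0cond S0 g) :
    (freeD lam g).card = n - k := by
  rw [freeD, Finset.card_sdiff_of_subset (usedD_subset lam g hbox), card_Dall,
    card_usedD S0 h0 g hinj hP0]


/-! ### The building map -/

lemma ext_low {k n : ℕ} (h2k : 2*k ≤ 2*n) {S : Equiv.Perm (Fin (2*k))}
    {T : Equiv.Perm (Fin (2*n))} (hT : ExtendsPP S T) (x : Fin (2*k)) :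
    T (Fin.castLE h2k x) = Fin.castLE h2k (S x) :=
  Fin.ext (hT.1 x (Fin.castLE h2k x) rfl)

def buildF {k n : ℕ} (g : Fin (2*k) → ℕ × ℕ) (D : Fin (n-k) → ℕ × ℕ)
    (b : Fin (n-k) → Bool) : Fin (2*n) → ℕ × ℕ :=
  fun y => if hy : (y : ℕ) < 2*k then g ⟨y, hy⟩
    else ((D ⟨((y : ℕ) - 2*k)/2, by have := y.isLt; omega⟩).1,
      2 * (D ⟨((y : ℕ) - 2*k)/2, by have := y.isLt; omega⟩).2 +
        (if b ⟨((y : ℕ) - 2*k)/2, by have := y.isLt; omega⟩ then 1 - (y : ℕ) % 2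
         else (y : ℕ) % 2))

lemma buildF_low {k n : ℕ} (h2k : 2*k ≤ 2*n) (g : Fin (2*k) → ℕ × ℕ)
    (D : Fin (n-k) → ℕ × ℕ) (b : Fin (n-k) → Bool) (x : Fin (2*k)) :
    buildF g D b (Fin.castLE h2k x) = g x := by
  have hx : ((Fin.castLE h2k x : Fin (2*n)) : ℕ) < 2*k := x.isLt
  simp only [buildF]
  rw [dif_pos hx]
  congr 1

lemma buildF_high {k n : ℕ} (g : Fin (2*k) → ℕ × ℕ) (D : Fin (n-k) → ℕ × ℕ)
    (b : Fin (n-k) → Bool) (y : Fin (2*n)) (hy : ¬ (y : ℕ) < 2*k) (j : Fin (n-k))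
    (hj : (j : ℕ) = ((y : ℕ) - 2*k)/2) :
    buildF g D b y =
      ((D j).1, 2 * (D j).2 + (if b j then 1 - (y : ℕ) % 2 else (y : ℕ) % 2)) := by
  rcases j with ⟨jv, hjv⟩
  simp only [Fin.val_mk] at hj
  subst hj
  simp only [buildF]
  rw [dif_neg hy]


lemma buildF_good {k n : ℕ} (h2k : 2*k ≤ 2*n)
    {S0 S1 S2 : Equiv.Perm (Fin (2*k))} {T0 T1 T2 : Equiv.Perm (Fin (2*n))}
    (hT0 : ExtendsPP S0 T0) (hT1 : ExtendsPP S1 T1) (hT2 : ExtendsPP S2 T2)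
    (lam : Nat.Partition n) (g : Fin (2*k) → ℕ × ℕ)
    (hginj : Function.Injective g) (hgbox : InBoxes2 lam g)
    (hgP0 : P0cond S0 g) (hgP1 : P1cond S0 S1 g) (hgP2 : P2cond S2 g)
    (D : Fin (n-k) → ℕ × ℕ) (b : Fin (n-k) → Bool)
    (hD1 : ∀ j, D j ∈ freeD lam g) (hD2 : Function.Injective D) :
    Function.Injective (buildF g D b) ∧ InBoxes2 lam (buildF g D b) ∧
    P0cond T0 (buildF g D b) ∧ P1cond T0 T1 (buildF g D b) ∧ P2cond T2 (buildF g D b) := by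
  have hlow : ∀ (y : Fin (2*n)) (hy : (y : ℕ) < 2*k), buildF g D b y = g ⟨(y : ℕ), hy⟩ := by
    intro y hy
    have hyx : y = Fin.castLE h2k ⟨(y : ℕ), hy⟩ := Fin.ext rfl
    conv_lhs => rw [hyx]
    exact buildF_low h2k g D b _
  have hhigh := buildF_high g D b
  have hDall : ∀ jj, (D jj).2 < rowLen lam (D jj).1 :=
    fun jj => mem_Dall.mp ((Finset.mem_sdiff.mp (hD1 jj)).1)
  have hDfree : ∀ jj, D jj ∉ usedD g := fun jj => (Finset.mem_sdiff.mp (hD1 jj)).2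
  have keyLD : ∀ (x : Fin (2*k)) (jj : Fin (n-k)) (e : ℕ), e ≤ 1 →
      g x ≠ ((D jj).1, 2*(D jj).2 + e) := by
    intro x jj e he hEq
    apply hDfree jj
    apply Finset.mem_image.mpr
    refine ⟨x, mem_univ x, ?_⟩
    have h1 : (g x).1 = (D jj).1 := by rw [hEq]
    have h2 : (g x).2 = 2*(D jj).2 + e := by rw [hEq]
    exact Prod.ext h1 (by omega)
  refine ⟨?_, ?_, ?_, ?_, ?_⟩
  · -- injectivity
    intro y y' h
    by_cases hy : (y : ℕ) < 2*k <;> by_cases hy' : (y' : ℕ) < 2*k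
    · rw [hlow y hy, hlow y' hy'] at h
      have hval := congrArg Fin.val (hginj h)
      exact Fin.ext hval
    · exfalso
      obtain ⟨jy, hjy⟩ : ∃ jj : Fin (n-k), (jj : ℕ) = ((y' : ℕ) - 2*k)/2 :=
        ⟨⟨_, by have := y'.isLt; omega⟩, rfl⟩
      rw [hlow y hy, hhigh y' hy' jy hjy] at h
      exact keyLD _ _ _ (by split <;> omega) h
    · exfalso
      obtain ⟨jy, hjy⟩ : ∃ jj : Fin (n-k), (jj : ℕ) = ((y : ℕ) - 2*k)/2 :=
        ⟨⟨_, by have := y.isLt; omega⟩, rfl⟩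
      rw [hlow y' hy', hhigh y hy jy hjy] at h
      exact keyLD _ _ _ (by split <;> omega) h.symm
    · obtain ⟨jy, hjy⟩ : ∃ jj : Fin (n-k), (jj : ℕ) = ((y : ℕ) - 2*k)/2 :=
        ⟨⟨_, by have := y.isLt; omega⟩, rfl⟩
      obtain ⟨jy', hjy'⟩ : ∃ jj : Fin (n-k), (jj : ℕ) = ((y' : ℕ) - 2*k)/2 :=
        ⟨⟨_, by have := y'.isLt; omega⟩, rfl⟩
      rw [hhigh y hy jy hjy, hhigh y' hy' jy' hjy'] at h
      simp only [Prod.mk.injEq] at h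
      obtain ⟨h1, h2⟩ := h
      have hDeq : D jy = D jy' := Prod.ext h1 (by split at h2 <;> split at h2 <;> omega)
      have hjj := hD2 hDeq
      have hv : ((y : ℕ) - 2*k)/2 = ((y' : ℕ) - 2*k)/2 := by
        rw [← hjy, ← hjy', hjj]
      rw [hjj] at h2
      have hpar : (y : ℕ) % 2 = (y' : ℕ) % 2 := by split at h2 <;> omega
      exact Fin.ext (by omega)
  · -- InBoxes2
    intro y
    by_cases hy : (y : ℕ) < 2*k
    · rw [hlow y hy]; exact hgbox ⟨(y : ℕ), hy⟩
    · obtain ⟨jy, hjy⟩ : ∃ jj : Fin (n-k), (jj : ℕ) = ((y : ℕ) - 2*k)/2 :=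
        ⟨⟨_, by have := y.isLt; omega⟩, rfl⟩
      rw [hhigh y hy jy hjy]
      have hD := hDall jy
      simp only
      split <;> omega
  · -- P0
    intro y
    by_cases hy : (y : ℕ) < 2*k
    · have hyx : y = Fin.castLE h2k ⟨(y : ℕ), hy⟩ := Fin.ext rfl
      rw [hyx, ext_low h2k hT0]
      simp only [buildF_low h2k]
      exact hgP0 ⟨(y : ℕ), hy⟩
    · obtain ⟨jy, hjy⟩ : ∃ jj : Fin (n-k), (jj : ℕ) = ((y : ℕ) - 2*k)/2 :=
        ⟨⟨_, by have := y.isLt; omega⟩, rfl⟩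
      have hval := hT0.2 y (by omega)
      have hyT : ¬ ((T0 y : ℕ) < 2*k) := by omega
      rw [hhigh y hy jy hjy, hhigh (T0 y) hyT jy (by omega)]
      have hpar : ((T0 y : ℕ)) % 2 = 1 - (y : ℕ) % 2 := by omega
      rw [hpar]
      refine ⟨rfl, ?_, ?_⟩ <;> cases hb : b jy <;> simp only [hb] <;> simp <;> omega
  · -- P1
    intro y
    by_cases hy : (y : ℕ) < 2*k
    · have hyx : y = Fin.castLE h2k ⟨(y : ℕ), hy⟩ := Fin.ext rfl
      rw [hyx, ext_low h2k hT1, ext_low h2k hT0]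
      simp only [buildF_low h2k]
      exact hgP1 ⟨(y : ℕ), hy⟩
    · have hv1 := hT1.2 y (by omega)
      have hv0 := hT0.2 (T1 y) (by omega)
      have hTT : T0 (T1 y) = y := Fin.ext (by omega)
      rw [hTT]
  · -- P2
    intro y
    by_cases hy : (y : ℕ) < 2*k
    · have hyx : y = Fin.castLE h2k ⟨(y : ℕ), hy⟩ := Fin.ext rfl
      rw [hyx, ext_low h2k hT2]
      simp only [buildF_low h2k]
      exact hgP2 ⟨(y : ℕ), hy⟩
    · obtain ⟨jy, hjy⟩ : ∃ jj : Fin (n-k), (jj : ℕ) = ((y : ℕ) - 2*k)/2 :=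
        ⟨⟨_, by have := y.isLt; omega⟩, rfl⟩
      have hv2 := hT2.2 y (by omega)
      have hyT : ¬ ((T2 y : ℕ) < 2*k) := by omega
      rw [hhigh y hy jy hjy, hhigh (T2 y) hyT jy (by omega)]


lemma build_mem {k n : ℕ} (h2k : 2*k ≤ 2*n) {S0 : Equiv.Perm (Fin (2*k))}
    {T0 : Equiv.Perm (Fin (2*n))} (hT0 : ExtendsPP S0 T0) (lam : Nat.Partition n)
    (g : Fin (2*k) → ℕ × ℕ) (f : Fin (2*n) → ℕ × ℕ)
    (finj : Function.Injective f) (fbox : InBoxes2 lam f) (fP0 : P0cond T0 f)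
    (hres : ∀ x, f (Fin.castLE h2k x) = g x)
    (j : Fin (n-k)) (z : Fin (2*n)) (hz : (z : ℕ) = 2*k + 2*(j : ℕ)) :
    ((f z).1, (f z).2 / 2) ∈ freeD lam g := by
  rw [freeD, Finset.mem_sdiff]
  constructor
  · rw [mem_Dall]
    have := fbox z
    simp only
    omega
  · intro hmem
    obtain ⟨x, _, hx⟩ := Finset.mem_image.mp hmem
    simp only [Prod.mk.injEq] at hx
    obtain ⟨hx1, hx2⟩ := hx
    have hgx : g x = f (Fin.castLE h2k x) := (hres x).symm
    have hgx' : g (S0 x) = f (Fin.castLE h2k (S0 x)) := (hres (S0 x)).symm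
    have hP0x := fP0 (Fin.castLE h2k x)
    rw [ext_low h2k hT0 x] at hP0x
    rw [hgx] at hx1 hx2
    -- cols agree up to pairing
    have hcol : (f z).2 = (f (Fin.castLE h2k x)).2 ∨
        (f z).2 = (f (Fin.castLE h2k (S0 x))).2 := by omega
    rcases hcol with hc | hc
    · have : f z = f (Fin.castLE h2k x) := Prod.ext (by omega) hc
      have := congrArg Fin.val (finj this)
      have hxlt := x.isLt
      simp only [Fin.coe_castLE] at this
      omega
    · have : f z = f (Fin.castLE h2k (S0 x)) := Prod.ext (by rw [hP0x.1]; omega) hc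
      have := congrArg Fin.val (finj this)
      have hxlt := (S0 x).isLt
      simp only [Fin.coe_castLE] at this
      omega

lemma build_Dinj {k n : ℕ} {S0 : Equiv.Perm (Fin (2*k))}
    {T0 : Equiv.Perm (Fin (2*n))} (hT0 : ExtendsPP S0 T0)
    (f : Fin (2*n) → ℕ × ℕ) (finj : Function.Injective f) (fP0 : P0cond T0 f)
    (j j' : Fin (n-k)) (z z' : Fin (2*n))
    (hz : (z : ℕ) = 2*k + 2*(j : ℕ)) (hz' : (z' : ℕ) = 2*k + 2*(j' : ℕ))
    (heq : ((f z).1, (f z).2 / 2) = ((f z').1, (f z').2 / 2)) : j = j' := by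
  have hP0z := fP0 z
  have hv0 := hT0.2 z (by omega)
  simp only [Prod.mk.injEq] at heq
  obtain ⟨h1, h2⟩ := heq
  have hcol : (f z').2 = (f z).2 ∨ (f z').2 = (f (T0 z)).2 := by omega
  rcases hcol with hc | hc
  · have : f z' = f z := Prod.ext (by omega) hc
    have := congrArg Fin.val (finj this)
    exact Fin.ext (by omega)
  · have : f z' = f (T0 z) := Prod.ext (by rw [hP0z.1]; omega) hc
    have := congrArg Fin.val (finj this)
    omega

lemma build_eq {k n : ℕ} (h2k : 2*k ≤ 2*n) {S0 : Equiv.Perm (Fin (2*k))}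
    {T0 : Equiv.Perm (Fin (2*n))} (hT0 : ExtendsPP S0 T0)
    (g : Fin (2*k) → ℕ × ℕ) (f : Fin (2*n) → ℕ × ℕ) (fP0 : P0cond T0 f)
    (hres : ∀ x, f (Fin.castLE h2k x) = g x)
    (D : Fin (n-k) → ℕ × ℕ) (b : Fin (n-k) → Bool)
    (hD : ∀ (j : Fin (n-k)) (z : Fin (2*n)), (z : ℕ) = 2*k + 2*(j : ℕ) →
      D j = ((f z).1, (f z).2 / 2))
    (hb : ∀ (j : Fin (n-k)) (z : Fin (2*n)), (z : ℕ) = 2*k + 2*(j : ℕ) →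
      b j = decide ((f z).2 % 2 = 1)) :
    f = buildF g D b := by
  funext y
  by_cases hy : (y : ℕ) < 2*k
  · have hyx : y = Fin.castLE h2k ⟨(y : ℕ), hy⟩ := Fin.ext rfl
    conv_rhs => rw [hyx]
    rw [buildF_low h2k g D b]
    have := hres ⟨(y : ℕ), hy⟩
    rw [← hyx] at this
    exact this
  · obtain ⟨jy, hjy⟩ : ∃ jj : Fin (n-k), (jj : ℕ) = ((y : ℕ) - 2*k)/2 :=
      ⟨⟨_, by have := y.isLt; omega⟩, rfl⟩
    rw [buildF_high g D b y hy jy hjy]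
    by_cases hpar : (y : ℕ) % 2 = 0
    · have hzy : (y : ℕ) = 2*k + 2*(jy : ℕ) := by omega
      rw [hD jy y hzy, hb jy y hzy]
      refine Prod.ext rfl ?_
      simp only
      cases hbo : decide ((f y).2 % 2 = 1)
      · have hodd : ¬ ((f y).2 % 2 = 1) := of_decide_eq_false hbo
        rw [if_neg (by simp)]
        omega
      · have hodd := of_decide_eq_true hbo
        rw [if_pos rfl]
        omega
    · obtain ⟨z, hzv⟩ : ∃ z : Fin (2*n), (z : ℕ) = 2*k + 2*(jy : ℕ) :=
        ⟨⟨_, by have := jy.isLt; omega⟩, rfl⟩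
      rw [hD jy z hzv, hb jy z hzv]
      have hv0 := hT0.2 z (by omega)
      have hTz : T0 z = y := Fin.ext (by omega)
      have hP0z := fP0 z
      rw [hTz] at hP0z
      refine Prod.ext hP0z.1 ?_
      simp only
      have h1 := hP0z.2.1
      have h2 := hP0z.2.2
      cases hbo : decide ((f z).2 % 2 = 1)
      · have hodd : ¬ ((f z).2 % 2 = 1) := of_decide_eq_false hbo
        rw [if_neg (by simp)]
        omega
      · have hodd := of_decide_eq_true hbo
        rw [if_pos rfl]
        omega


def idx0 {k n : ℕ} (j : Fin (n-k)) : Fin (2*n) :=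
  ⟨2*k + 2*(j : ℕ), by have := j.isLt; omega⟩

lemma build_inj {k n : ℕ} (g : Fin (2*k) → ℕ × ℕ) (D D' : Fin (n-k) → ℕ × ℕ)
    (b b' : Fin (n-k) → Bool) (h : buildF g D b = buildF g D' b') (j : Fin (n-k)) :
    D j = D' j ∧ b j = b' j := by
  have hzy : ¬ ((idx0 j : Fin (2*n)) : ℕ) < 2*k := by
    simp only [idx0]; omega
  have hc := congrFun h (idx0 j)
  rw [buildF_high g D b (idx0 j) hzy j (by simp only [idx0]; omega),
    buildF_high g D' b' (idx0 j) hzy j (by simp only [idx0]; omega)] at hc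
  simp only [Prod.mk.injEq] at hc
  obtain ⟨h1, h2⟩ := hc
  have hpz : ((idx0 j : Fin (2*n)) : ℕ) % 2 = 0 := by simp only [idx0]; omega
  rw [hpz] at h2
  refine ⟨Prod.ext h1 ?_, ?_⟩ <;>
    (cases hb1 : b j <;> cases hb2 : b' j <;> rw [hb1, hb2] at h2 <;> simp at h2 <;>
      first | rfl | omega)

lemma finite_cond {M n : ℕ} (lam : n.Partition) (Q : (Fin M → ℕ × ℕ) → Prop)
    (hQ : ∀ f, Q f → InBoxes2 lam f) : Finite {f : Fin M → ℕ × ℕ // Q f} := by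
  have hmem : ∀ (f : Fin M → ℕ × ℕ), Q f → ∀ l,
      f l ∈ (range n ×ˢ range (2*n) : Finset (ℕ × ℕ)) := by
    intro f hf l
    have h := hQ f hf l
    have h1 := rowLen_le lam (f l).1
    have h2 : (f l).1 < n := rowLen_pos_lt lam (by omega)
    simp only [Finset.mem_product, Finset.mem_range]
    omega
  let F : {f : Fin M → ℕ × ℕ // Q f} →
      (Fin M → {p : ℕ × ℕ // p ∈ (range n ×ˢ range (2*n) : Finset (ℕ × ℕ))}) :=
    fun fh l => ⟨fh.1 l, hmem fh.1 fh.2 l⟩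
  have hF : Function.Injective F := by
    intro a b hab
    apply Subtype.ext
    funext l
    exact congrArg Subtype.val (congrFun hab l)
  exact Finite.of_injective F hF

lemma restrict_good {k n : ℕ} (h2k : 2*k ≤ 2*n)
    {S0 S1 S2 : Equiv.Perm (Fin (2*k))} {T0 T1 T2 : Equiv.Perm (Fin (2*n))}
    (hT0 : ExtendsPP S0 T0) (hT1 : ExtendsPP S1 T1) (hT2 : ExtendsPP S2 T2)
    (lam : Nat.Partition n) (f : Fin (2*n) → ℕ × ℕ)
    (hf : Function.Injective f ∧ InBoxes2 lam f ∧ P0cond T0 f ∧ P1cond T0 T1 f ∧ P2cond T2 f) :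
    Function.Injective (fun x : Fin (2*k) => f (Fin.castLE h2k x)) ∧
    InBoxes2 lam (fun x : Fin (2*k) => f (Fin.castLE h2k x)) ∧
    P0cond S0 (fun x : Fin (2*k) => f (Fin.castLE h2k x)) ∧
    P1cond S0 S1 (fun x : Fin (2*k) => f (Fin.castLE h2k x)) ∧
    P2cond S2 (fun x : Fin (2*k) => f (Fin.castLE h2k x)) := by
  obtain ⟨finj, fbox, f0, f1, f2⟩ := hf
  refine ⟨?_, ?_, ?_, ?_, ?_⟩
  · intro x y hxy
    have h := finj hxy
    have hval := congrArg Fin.val h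
    exact Fin.ext hval
  · intro x; exact fbox (Fin.castLE h2k x)
  · intro x
    have h := f0 (Fin.castLE h2k x)
    rw [ext_low h2k hT0 x] at h
    exact h
  · intro x
    have h := f1 (Fin.castLE h2k x)
    rw [ext_low h2k hT1 x, ext_low h2k hT0 (S1 x)] at h
    exact h
  · intro x
    have h := f2 (Fin.castLE h2k x)
    rw [ext_low h2k hT2 x] at h
    exact h

lemma fiber_count {k n : ℕ} (h2k : 2*k ≤ 2*n)
    (S0 S1 S2 : Equiv.Perm (Fin (2*k))) (h0 : IsPairPartition S0)
    (T0 T1 T2 : Equiv.Perm (Fin (2*n)))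
    (hT0 : ExtendsPP S0 T0) (hT1 : ExtendsPP S1 T1) (hT2 : ExtendsPP S2 T2)
    (lam : Nat.Partition n) (g : Fin (2*k) → ℕ × ℕ)
    (hg : Function.Injective g ∧ InBoxes2 lam g ∧ P0cond S0 g ∧ P1cond S0 S1 g ∧ P2cond S2 g) :
    Nat.card {f : Fin (2*n) → ℕ × ℕ //
      (Function.Injective f ∧ InBoxes2 lam f ∧ P0cond T0 f ∧ P1cond T0 T1 f ∧ P2cond T2 f)
      ∧ ∀ x : Fin (2*k), f (Fin.castLE h2k x) = g x}
    = 2^(n-k) * (n-k).factorial := by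
  classical
  obtain ⟨ginj, gbox, g0, g1, g2⟩ := hg
  have hFDcard : (freeD lam g).card = n - k := card_freeD lam S0 h0 g ginj gbox g0
  let Ψ : ((Fin (n-k) ↪ {p : ℕ × ℕ // p ∈ freeD lam g}) × (Fin (n-k) → Bool)) →
      {f : Fin (2*n) → ℕ × ℕ //
        (Function.Injective f ∧ InBoxes2 lam f ∧ P0cond T0 f ∧ P1cond T0 T1 f ∧ P2cond T2 f)
        ∧ ∀ x : Fin (2*k), f (Fin.castLE h2k x) = g x} :=
    fun eb => ⟨buildF g (fun j => ((eb.1 j : {p : ℕ × ℕ // p ∈ freeD lam g}) : ℕ × ℕ)) eb.2,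
      ⟨buildF_good h2k hT0 hT1 hT2 lam g ginj gbox g0 g1 g2 _ _ (fun j => (eb.1 j).2)
        (fun j j' hjj => eb.1.injective (Subtype.ext hjj)),
       fun x => buildF_low h2k g _ _ x⟩⟩
  have hbij : Function.Bijective Ψ := by
    constructor
    · intro eb eb' h
      obtain ⟨e, bb⟩ := eb
      obtain ⟨e', bb'⟩ := eb'
      have hval : buildF g (fun j => ((e j : {p : ℕ × ℕ // p ∈ freeD lam g}) : ℕ × ℕ)) bb =
          buildF g (fun j => ((e' j : {p : ℕ × ℕ // p ∈ freeD lam g}) : ℕ × ℕ)) bb' :=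
        congrArg Subtype.val h
      have hj := fun j => build_inj g _ _ _ _ hval j
      simp only [Prod.mk.injEq]
      constructor
      · apply DFunLike.ext
        intro j
        exact Subtype.ext (hj j).1
      · funext j
        exact (hj j).2
    · rintro ⟨f, ⟨finj, fbox, f0, f1, f2⟩, hres⟩
      refine ⟨⟨⟨fun j => ⟨((f (idx0 j)).1, (f (idx0 j)).2 / 2),
          build_mem h2k hT0 lam g f finj fbox f0 hres j (idx0 j) rfl⟩,
          fun j j' hjj => build_Dinj hT0 f finj f0 j j' (idx0 j) (idx0 j') rfl rfl
            (congrArg Subtype.val hjj)⟩,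
        fun j => decide ((f (idx0 j)).2 % 2 = 1)⟩, ?_⟩
      apply Subtype.ext
      exact (build_eq h2k hT0 g f f0 hres _ _
        (fun j z hz => by rw [show z = idx0 j from Fin.ext hz])
        (fun j z hz => by rw [show z = idx0 j from Fin.ext hz])).symm
  rw [← Nat.card_eq_of_bijective Ψ hbij]
  haveI : Fintype {p : ℕ × ℕ // p ∈ freeD lam g} := FinsetCoe.fintype (freeD lam g)
  rw [Nat.card_prod, Nat.card_eq_fintype_card, Nat.card_eq_fintype_card,
    Fintype.card_embedding_eq, Fintype.card_fun]
  simp only [Fintype.card_coe, Fintype.card_fin, Fintype.card_bool, hFDcard,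
    Nat.descFactorial_self]
  ring

lemma mycard_sigma {ι : Type*} [Fintype ι] (κ : ι → Type*) [∀ i, Finite (κ i)] :
    Nat.card (Σ i, κ i) = ∑ i, Nat.card (κ i) := by
  haveI := fun i => Fintype.ofFinite (κ i)
  simp [Nat.card_eq_fintype_card, Fintype.card_sigma]



/-- If `S̃₀, S̃₁, S̃₂` are the extensions of the pair-partitions
`S₀, S₁, S₂` of `[2k]` to `[2n]` by the pairs `{2k+1,2k+2}, …, {2n-1,2n}`, then
`N̂²_{S̃₀,S̃₁,S̃₂}(λ) = 2^{n-k} (n-k)! N̂²_{S₀,S₁,S₂}(λ)`. -/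
theorem statement10 {k n : ℕ} (hkn : k ≤ n)
    (S0 S1 S2 : Equiv.Perm (Fin (2*k)))
    (h0 : IsPairPartition S0) (h1 : IsPairPartition S1) (h2 : IsPairPartition S2)
    (T0 T1 T2 : Equiv.Perm (Fin (2*n)))
    (hT0 : ExtendsPP S0 T0) (hT1 : ExtendsPP S1 T1) (hT2 : ExtendsPP S2 T2)
    (lam : Nat.Partition n) :
    Nhat2 T0 T1 T2 lam = 2 ^ (n - k) * (n - k).factorial * Nhat2 S0 S1 S2 lam := by
  classical
  have h2k : 2*k ≤ 2*n := by omega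
  let A := {f : Fin (2*n) → ℕ × ℕ //
    Function.Injective f ∧ InBoxes2 lam f ∧ P0cond T0 f ∧ P1cond T0 T1 f ∧ P2cond T2 f}
  let B := {f : Fin (2*k) → ℕ × ℕ //
    Function.Injective f ∧ InBoxes2 lam f ∧ P0cond S0 f ∧ P1cond S0 S1 f ∧ P2cond S2 f}
  haveI hfinA : Finite A := finite_cond lam _ (fun f hf => hf.2.1)
  haveI hfinB : Finite B := finite_cond lam _ (fun f hf => hf.2.1)
  haveI : Fintype B := Fintype.ofFinite B
  let Φ : A → B := fun a => ⟨fun x => a.1 (Fin.castLE h2k x),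
    restrict_good h2k hT0 hT1 hT2 lam a.1 a.2⟩
  have hmain : Nat.card A = ∑ gs : B, Nat.card {a : A // Φ a = gs} := by
    rw [← mycard_sigma]
    exact Nat.card_congr (Equiv.sigmaFiberEquiv Φ).symm
  have hfib : ∀ gs : B, Nat.card {a : A // Φ a = gs} = 2^(n-k) * (n-k).factorial := by
    intro gs
    have e : {a : A // Φ a = gs} ≃ {f : Fin (2*n) → ℕ × ℕ //
        (Function.Injective f ∧ InBoxes2 lam f ∧ P0cond T0 f ∧ P1cond T0 T1 f ∧ P2cond T2 f)
        ∧ ∀ x : Fin (2*k), f (Fin.castLE h2k x) = gs.1 x} :=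
      { toFun := fun a => ⟨a.1.1, a.1.2, fun x => congrFun (congrArg Subtype.val a.2) x⟩
        invFun := fun s => ⟨⟨s.1, s.2.1⟩, Subtype.ext (funext s.2.2)⟩
        left_inv := fun a => by apply Subtype.ext; apply Subtype.ext; rfl
        right_inv := fun s => rfl }
    rw [Nat.card_congr e]
    exact fiber_count h2k S0 S1 S2 h0 T0 T1 T2 hT0 hT1 hT2 lam gs.1 gs.2
  have hNA : Nhat2 T0 T1 T2 lam = Nat.card A := rfl
  have hNB : Nhat2 S0 S1 S2 lam = Nat.card B := rfl
  rw [hNA, hNB, hmain, Finset.sum_congr rfl (fun gs _ => hfib gs), Finset.sum_const,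
    smul_eq_mul, Finset.card_univ, Nat.card_eq_fintype_card]
  ring


end ZonalPP
end
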